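/- arXiv:2508.17301 — 5 statements merged into one kernel-verified Lean document; each statement's English description precedes it below -/
import Mathlib

section
/- Fix τ ∈ [0,1]. (i) There exists η ∈ [0, 2 − 2δλ₁) such that Π(𝕡(η)) = τ·Π(p^ur) and 𝕡(η) maximizes consumer surplus over the constraint set: for every p ∈ ℝⁿ with Π(p) ≥ τ·Π(p^ur) one has V(p) ≤ V(𝕡(η)). (ii) If τ ∈ (0,1], there exists η ≤ 0 such that Π(𝕡(η)) = τ·Π(p^ur) and 𝕡(η) minimizes consumer surplus over the same constraint set: for every p with Π(p) ≥ τ·Π(p^ur) one has V(p) ≥ V(𝕡(η)). -/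
open Matrix

noncomputable def Hmat {n : ℕ} (G : Matrix (Fin n) (Fin n) ℝ) (δ : ℝ) :
    Matrix (Fin n) (Fin n) ℝ :=
  (1 - δ • G)⁻¹

/-- Monopolist profit Π(p) = (p − c)ᵀ H (a − p). -/
noncomputable def profit {n : ℕ} (G : Matrix (Fin n) (Fin n) ℝ) (δ : ℝ)
    (a c p : Fin n → ℝ) : ℝ :=
  (p - c) ⬝ᵥ (Hmat G δ *ᵥ (a - p))

/-- Aggregate consumer surplus V(p) = (1/2)(a − p)ᵀ H² (a − p). -/
noncomputable def surplus {n : ℕ} (G : Matrix (Fin n) (Fin n) ℝ) (δ : ℝ)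
    (a p : Fin n → ℝ) : ℝ :=
  (1 / 2 : ℝ) * ((a - p) ⬝ᵥ ((Hmat G δ * Hmat G δ) *ᵥ (a - p)))

/-- Unrestricted optimal price p^ur = (a + c)/2. -/
noncomputable def pUR {n : ℕ} (a c : Fin n → ℝ) : Fin n → ℝ :=
  (1 / 2 : ℝ) • (a + c)

/-- The Pareto price family 𝕡(η). -/
noncomputable def pFam {n : ℕ} (G : Matrix (Fin n) (Fin n) ℝ) (δ : ℝ)
    (a c : Fin n → ℝ) (η : ℝ) : Fin n → ℝ :=
  pUR a c - (η / (2 - η)) • ((1 - (2 * δ / (2 - η)) • G)⁻¹ *ᵥ ((1 / 2 : ℝ) • (a - c)))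

open Pointwise

section aux
variable {n : ℕ}

lemma dot_sq_le (x y : Fin n → ℝ) : (x ⬝ᵥ y)^2 ≤ (x ⬝ᵥ x) * (y ⬝ᵥ y) := by
  simpa [dotProduct, pow_two] using
    Finset.sum_mul_sq_le_sq_mul_sq Finset.univ x y

lemma herm_pair {A : Matrix (Fin n) (Fin n) ℝ} (hA : A.IsHermitian) (u v : Fin n → ℝ) :
    u ⬝ᵥ (A *ᵥ v) = v ⬝ᵥ (A *ᵥ u) := by
  have hAt : Aᵀ = A := by
    rw [← conjTranspose_eq_transpose_of_trivial]; exact hA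
  rw [dotProduct_mulVec, dotProduct_comm, ← mulVec_transpose, hAt]

end aux

section ray
variable {n : ℕ}

lemma real_herm {A : Matrix (Fin n) (Fin n) ℝ} (h : A.IsSymm) : A.IsHermitian := by
  rw [Matrix.IsHermitian, conjTranspose_eq_transpose_of_trivial]; exact h

lemma shift_psd {G : Matrix (Fin n) (Fin n) ℝ} (hGsym : G.IsSymm) {lam1 : ℝ}
    (hmax : ∀ μ ∈ spectrum ℝ G, μ ≤ lam1) :
    (lam1 • (1 : Matrix (Fin n) (Fin n) ℝ) - G).PosSemidef := by
  have hGh : G.IsHermitian := real_herm hGsym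
  have hAh : (lam1 • (1 : Matrix (Fin n) (Fin n) ℝ) - G).IsHermitian := by
    apply real_herm
    unfold Matrix.IsSymm
    rw [transpose_sub, transpose_smul, transpose_one, hGsym]
  rw [hAh.posSemidef_iff_eigenvalues_nonneg]
  intro i
  show 0 ≤ _
  have hm := hAh.eigenvalues_mem_spectrum_real i
  have hrepr : lam1 • (1 : Matrix (Fin n) (Fin n) ℝ) - G
      = (algebraMap ℝ (Matrix (Fin n) (Fin n) ℝ)) lam1 - G := by
    rw [Algebra.algebraMap_eq_smul_one]
  have hm2 : hAh.eigenvalues i ∈ (({lam1} : Set ℝ) - spectrum ℝ G) := by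
    rw [spectrum.singleton_sub_eq, ← hrepr]; exact hm
  obtain ⟨x, hx, y, hy, hxy⟩ := Set.mem_sub.1 hm2
  rcases Set.mem_singleton_iff.1 hx with rfl
  have := hmax y hy
  rw [← hxy]
  linarith

lemma rayleigh {G : Matrix (Fin n) (Fin n) ℝ} (hGsym : G.IsSymm) {lam1 : ℝ}
    (hmax : ∀ μ ∈ spectrum ℝ G, μ ≤ lam1) (x : Fin n → ℝ) :
    x ⬝ᵥ (G *ᵥ x) ≤ lam1 * (x ⬝ᵥ x) := by
  have h := (shift_psd hGsym hmax).dotProduct_mulVec_nonneg x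
  rw [star_trivial] at h
  rw [sub_mulVec, smul_mulVec, one_mulVec, dotProduct_sub, dotProduct_smul] at h
  simpa [smul_eq_mul] using sub_nonneg.1 h

lemma perron {G : Matrix (Fin n) (Fin n) ℝ} (hGsym : G.IsSymm)
    (hGnn : ∀ i j, 0 ≤ G i j) {lam1 : ℝ} (hlam1 : lam1 ∈ spectrum ℝ G)
    (hmax : ∀ μ ∈ spectrum ℝ G, μ ≤ lam1) :
    ∃ v : Fin n → ℝ, v ≠ 0 ∧ (∀ i, 0 ≤ v i) ∧ G *ᵥ v = lam1 • v := by
  classical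
  have hnu : ¬ IsUnit ((algebraMap ℝ (Matrix (Fin n) (Fin n) ℝ)) lam1 - G) :=
    spectrum.mem_iff.1 hlam1
  have hdet : (lam1 • (1 : Matrix (Fin n) (Fin n) ℝ) - G).det = 0 := by
    by_contra h
    exact hnu (by
      rw [← Algebra.algebraMap_eq_smul_one] at h
      exact (Matrix.isUnit_iff_isUnit_det _).2 (Ne.isUnit h))
  obtain ⟨v₀, hv0ne, hv0⟩ := (Matrix.exists_mulVec_eq_zero_iff).2 hdet
  rw [sub_mulVec, smul_mulVec, one_mulVec, sub_eq_zero] at hv0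
  -- hv0 : lam1 • v₀ = G *ᵥ v₀
  set v : Fin n → ℝ := fun i => |v₀ i| with hv
  have hvsq : v ⬝ᵥ v = v₀ ⬝ᵥ v₀ := by
    simp [dotProduct, hv, abs_mul_abs_self]
  have hcompare : v₀ ⬝ᵥ (G *ᵥ v₀) ≤ v ⬝ᵥ (G *ᵥ v) := by
    simp only [dotProduct, mulVec, Finset.mul_sum]
    apply Finset.sum_le_sum
    intro i _
    apply Finset.sum_le_sum
    intro j _
    calc v₀ i * (G i j * v₀ j) ≤ |v₀ i * (G i j * v₀ j)| := le_abs_self _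
    _ = v i * (G i j * v j) := by
        rw [abs_mul, abs_mul, abs_of_nonneg (hGnn i j)]
  have hq0 : v₀ ⬝ᵥ (G *ᵥ v₀) = lam1 * (v₀ ⬝ᵥ v₀) := by
    rw [← hv0, dotProduct_smul, smul_eq_mul]
  have hub := rayleigh hGsym hmax v
  have hqv : v ⬝ᵥ ((lam1 • (1 : Matrix (Fin n) (Fin n) ℝ) - G) *ᵥ v) = 0 := by
    rw [sub_mulVec, smul_mulVec, one_mulVec, dotProduct_sub, dotProduct_smul,
      smul_eq_mul]
    rw [hvsq] at hub ⊢
    nlinarith [hcompare, hq0]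
  have hker := ((shift_psd hGsym hmax).dotProduct_mulVec_zero_iff v).1 (by
    rwa [star_trivial])
  rw [sub_mulVec, smul_mulVec, one_mulVec, sub_eq_zero] at hker
  refine ⟨v, ?_, fun i => abs_nonneg _, hker.symm⟩
  intro h
  apply hv0ne
  funext i
  have : v i = 0 := congrFun h i
  simpa [hv, abs_eq_zero] using this

end ray

section main
variable {n : ℕ} {G : Matrix (Fin n) (Fin n) ℝ} {δ : ℝ}

lemma posdef_quad {A : Matrix (Fin n) (Fin n) ℝ} (h : A.PosDef) {x : Fin n → ℝ}
    (hx : x ≠ 0) : 0 < x ⬝ᵥ (A *ᵥ x) := by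
  have := h.dotProduct_mulVec_pos hx
  rwa [star_trivial] at this

lemma posdef_quad_nonneg {A : Matrix (Fin n) (Fin n) ℝ} (h : A.PosDef) (x : Fin n → ℝ) :
    0 ≤ x ⬝ᵥ (A *ᵥ x) := by
  rcases eq_or_ne x 0 with rfl | hx
  · simp
  · exact (posdef_quad h hx).le

lemma hu_det (hn : 1 ≤ n) (hpd : (Hmat G δ).PosDef) : IsUnit (1 - δ • G).det := by
  rw [isUnit_iff_ne_zero]
  intro h0
  have h1 : Hmat G δ = 0 := by
    apply Matrix.nonsing_inv_apply_not_isUnit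
    rw [h0]
    exact not_isUnit_zero
  have hi : Fin n := ⟨0, hn⟩
  have hx : (Pi.single hi 1 : Fin n → ℝ) ≠ 0 := by
    intro h
    have := congrFun h hi
    simp at this
  have := posdef_quad hpd hx
  rw [h1] at this
  simp at this

lemma left_inv_H (hn : 1 ≤ n) (hpd : (Hmat G δ).PosDef) :
    (1 - δ • G) * Hmat G δ = 1 :=
  Matrix.mul_nonsing_inv _ (hu_det hn hpd)

lemma right_inv_H (hn : 1 ≤ n) (hpd : (Hmat G δ).PosDef) :
    Hmat G δ * (1 - δ • G) = 1 :=
  Matrix.nonsing_inv_mul _ (hu_det hn hpd)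

lemma comm_GH (hn : 1 ≤ n) (hpd : (Hmat G δ).PosDef) :
    G * Hmat G δ = Hmat G δ * G := by
  have h1 := left_inv_H hn hpd
  have h2 := right_inv_H hn hpd
  have hcomm1 : (1 - δ • G) * G = G * (1 - δ • G) := by noncomm_ring
  calc G * Hmat G δ
      = (Hmat G δ * (1 - δ • G)) * (G * Hmat G δ) := by rw [h2, one_mul]
    _ = Hmat G δ * (((1 - δ • G) * G) * Hmat G δ) := by
        simp only [Matrix.mul_assoc]
    _ = Hmat G δ * ((G * (1 - δ • G)) * Hmat G δ) := by rw [hcomm1]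
    _ = Hmat G δ * G := by
        simp only [Matrix.mul_assoc, h1, Matrix.mul_one]

lemma dot_self_nonneg (x : Fin n → ℝ) : 0 ≤ x ⬝ᵥ x :=
  Finset.sum_nonneg fun i _ => mul_self_nonneg _

lemma dot_self_pos {x : Fin n → ℝ} (hx : x ≠ 0) : 0 < x ⬝ᵥ x := by
  rcases (dot_self_nonneg x).lt_or_eq with h | h
  · exact h
  · exact absurd (dotProduct_self_eq_zero.1 h.symm) hx

lemma mulVec_HinvH (hn : 1 ≤ n) (hpd : (Hmat G δ).PosDef) (x : Fin n → ℝ) :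
    (1 - δ • G) *ᵥ (Hmat G δ *ᵥ x) = x := by
  rw [mulVec_mulVec, left_inv_H hn hpd, one_mulVec]

lemma Hbound (hn : 1 ≤ n) (hpd : (Hmat G δ).PosDef) (hGsym : G.IsSymm) {lam1 : ℝ}
    (hδ : 0 ≤ δ) (hmax : ∀ μ ∈ spectrum ℝ G, μ ≤ lam1) (hA1 : 0 < 1 - δ * lam1)
    (x : Fin n → ℝ) :
    x ⬝ᵥ (Hmat G δ *ᵥ x) ≤ (1 - δ * lam1)⁻¹ * (x ⬝ᵥ x) := by
  set H := Hmat G δ with hH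
  set y := H *ᵥ x with hy
  have hxy : (1 - δ • G) *ᵥ y = x := mulVec_HinvH hn hpd x
  have h1 : (1 - δ * lam1) * (y ⬝ᵥ y) ≤ x ⬝ᵥ y := by
    have hray := rayleigh hGsym hmax y
    have hexp : x ⬝ᵥ y = y ⬝ᵥ y - δ * (y ⬝ᵥ (G *ᵥ y)) := by
      rw [← hxy, sub_mulVec, smul_mulVec, one_mulVec, sub_dotProduct,
        smul_dotProduct, smul_eq_mul, dotProduct_comm (G *ᵥ y) y]
    rw [hexp]
    nlinarith [mul_le_mul_of_nonneg_left hray hδ]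
  have h2 : (x ⬝ᵥ y)^2 ≤ (x ⬝ᵥ x) * (y ⬝ᵥ y) := dot_sq_le x y
  have h3 : 0 ≤ x ⬝ᵥ y := posdef_quad_nonneg hpd x
  have hxx : 0 ≤ x ⬝ᵥ x := dot_self_nonneg x
  rcases h3.lt_or_eq with ht | ht
  · have h4 : (1 - δ * lam1) * (x ⬝ᵥ y) ≤ x ⬝ᵥ x := by nlinarith
    calc x ⬝ᵥ y = (1 - δ * lam1)⁻¹ * ((1 - δ * lam1) * (x ⬝ᵥ y)) := by
          field_simp
      _ ≤ (1 - δ * lam1)⁻¹ * (x ⬝ᵥ x) := by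
          apply mul_le_mul_of_nonneg_left h4 (by positivity)
  · rw [← ht]
    positivity

noncomputable def Mm {n : ℕ} (G : Matrix (Fin n) (Fin n) ℝ) (δ η : ℝ) :
    Matrix (Fin n) (Fin n) ℝ :=
  (2:ℝ) • (1 : Matrix (Fin n) (Fin n) ℝ) - η • Hmat G δ

lemma Mm_quad (η : ℝ) (x : Fin n → ℝ) :
    x ⬝ᵥ (Mm G δ η *ᵥ x) = 2*(x ⬝ᵥ x) - η*(x ⬝ᵥ (Hmat G δ *ᵥ x)) := by
  rw [Mm, sub_mulVec, smul_mulVec, smul_mulVec, one_mulVec,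
    dotProduct_sub, dotProduct_smul, dotProduct_smul, smul_eq_mul, smul_eq_mul]

lemma Ht (hpd : (Hmat G δ).PosDef) : (Hmat G δ)ᵀ = Hmat G δ := by
  rw [← conjTranspose_eq_transpose_of_trivial]; exact hpd.1

lemma Mm_pd (hn : 1 ≤ n) (hpd : (Hmat G δ).PosDef) (hGsym : G.IsSymm) {lam1 : ℝ}
    (hδ : 0 ≤ δ) (hmax : ∀ μ ∈ spectrum ℝ G, μ ≤ lam1) (hA1 : 0 < 1 - δ * lam1)
    {η : ℝ} (hη : η < 2 - 2 * δ * lam1) : (Mm G δ η).PosDef := by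
  rw [posDef_iff_dotProduct_mulVec]
  constructor
  · apply real_herm
    unfold Matrix.IsSymm
    rw [Mm, transpose_sub, transpose_smul, transpose_smul, transpose_one, Ht hpd]
  · intro x hx
    rw [star_trivial, Mm_quad]
    have hxx : 0 < x ⬝ᵥ x := dot_self_pos hx
    have ht0 : 0 ≤ x ⬝ᵥ (Hmat G δ *ᵥ x) := posdef_quad_nonneg hpd x
    rcases le_or_gt η 0 with hneg | hpos
    · nlinarith
    · have hb := Hbound hn hpd hGsym hδ hmax hA1 x
      have hlt : η * (1 - δ * lam1)⁻¹ < 2 := by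
        rw [← div_eq_mul_inv, div_lt_iff₀ hA1]
        linarith
      nlinarith [mul_le_mul_of_nonneg_left hb hpos.le,
        mul_lt_mul_of_pos_right hlt hxx]

noncomputable def zf {n : ℕ} (G : Matrix (Fin n) (Fin n) ℝ) (δ : ℝ)
    (b : Fin n → ℝ) (η : ℝ) : Fin n → ℝ :=
  (Mm G δ η)⁻¹ *ᵥ b

lemma Mm_isUnit_det (hn : 1 ≤ n) (hpd : (Hmat G δ).PosDef) (hGsym : G.IsSymm) {lam1 : ℝ}
    (hδ : 0 ≤ δ) (hmax : ∀ μ ∈ spectrum ℝ G, μ ≤ lam1) (hA1 : 0 < 1 - δ * lam1)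
    {η : ℝ} (hη : η < 2 - 2 * δ * lam1) : IsUnit (Mm G δ η).det :=
  isUnit_iff_ne_zero.2 (Mm_pd hn hpd hGsym hδ hmax hA1 hη).det_pos.ne'

lemma Mz_eq (hn : 1 ≤ n) (hpd : (Hmat G δ).PosDef) (hGsym : G.IsSymm) {lam1 : ℝ}
    (hδ : 0 ≤ δ) (hmax : ∀ μ ∈ spectrum ℝ G, μ ≤ lam1) (hA1 : 0 < 1 - δ * lam1)
    {η : ℝ} (hη : η < 2 - 2 * δ * lam1) (b : Fin n → ℝ) :
    Mm G δ η *ᵥ zf G δ b η = b := by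
  rw [zf, mulVec_mulVec, Matrix.mul_nonsing_inv _ (Mm_isUnit_det hn hpd hGsym hδ hmax hA1 hη),
    one_mulVec]

lemma keyPSD (hn : 1 ≤ n) (hpd : (Hmat G δ).PosDef) (hGsym : G.IsSymm) {lam1 : ℝ}
    (hδ : 0 ≤ δ) (hmax : ∀ μ ∈ spectrum ℝ G, μ ≤ lam1)
    {η : ℝ} (hη : η ≤ 2 - 2 * δ * lam1) (d : Fin n → ℝ) :
    (η/2) * ((Hmat G δ *ᵥ d) ⬝ᵥ (Hmat G δ *ᵥ d)) ≤ d ⬝ᵥ (Hmat G δ *ᵥ d) := by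
  set y := Hmat G δ *ᵥ d with hy
  have hxy : (1 - δ • G) *ᵥ y = d := mulVec_HinvH hn hpd d
  have hexp : d ⬝ᵥ y = y ⬝ᵥ y - δ * (y ⬝ᵥ (G *ᵥ y)) := by
    conv_lhs => rw [← hxy]
    rw [sub_mulVec, smul_mulVec, one_mulVec, sub_dotProduct,
      smul_dotProduct, smul_eq_mul, dotProduct_comm (G *ᵥ y) y]
  have hray := rayleigh hGsym hmax y
  have h2 : δ * (y ⬝ᵥ (G *ᵥ y)) ≤ δ * (lam1 * (y ⬝ᵥ y)) :=
    mul_le_mul_of_nonneg_left hray hδ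
  have hyy : 0 ≤ y ⬝ᵥ y := dot_self_nonneg y
  nlinarith

lemma keyId (hpd : (Hmat G δ).PosDef) (η : ℝ) (b z x : Fin n → ℝ)
    (hb : b = (2:ℝ) • z - η • (Hmat G δ *ᵥ z)) :
    (b - x) ⬝ᵥ (Hmat G δ *ᵥ x) + (η/2) * ((Hmat G δ *ᵥ x) ⬝ᵥ (Hmat G δ *ᵥ x))
      + ((x - z) ⬝ᵥ (Hmat G δ *ᵥ (x - z))
        - (η/2) * ((Hmat G δ *ᵥ (x - z)) ⬝ᵥ (Hmat G δ *ᵥ (x - z))))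
    = (b - z) ⬝ᵥ (Hmat G δ *ᵥ z) + (η/2) * ((Hmat G δ *ᵥ z) ⬝ᵥ (Hmat G δ *ᵥ z)) := by
  subst hb
  set H := Hmat G δ with hH
  have hs : x ⬝ᵥ (H *ᵥ z) = z ⬝ᵥ (H *ᵥ x) := herm_pair hpd.1 x z
  simp only [mulVec_sub, sub_dotProduct, dotProduct_sub, mulVec_smul,
    smul_dotProduct, dotProduct_smul, smul_eq_mul]
  rw [hs, dotProduct_comm (H *ᵥ z) (H *ᵥ x)]
  ring

lemma comm_nonsing_inv {A B : Matrix (Fin n) (Fin n) ℝ} (hu : IsUnit B.det)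
    (h : A * B = B * A) : A * B⁻¹ = B⁻¹ * A := by
  have h1 := Matrix.mul_nonsing_inv B hu
  have h2 := Matrix.nonsing_inv_mul B hu
  calc A * B⁻¹ = (B⁻¹ * B) * (A * B⁻¹) := by rw [h2, Matrix.one_mul]
    _ = B⁻¹ * ((B * A) * B⁻¹) := by simp only [Matrix.mul_assoc]
    _ = B⁻¹ * ((A * B) * B⁻¹) := by rw [h]
    _ = B⁻¹ * A := by simp only [Matrix.mul_assoc, h1, Matrix.mul_one]

lemma mulVec_cancel {A : Matrix (Fin n) (Fin n) ℝ} (hu : IsUnit A.det)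
    {u v : Fin n → ℝ} (h : A *ᵥ u = A *ᵥ v) : u = v := by
  have := congrArg (fun w => A⁻¹ *ᵥ w) h
  simpa [mulVec_mulVec, Matrix.nonsing_inv_mul _ hu, one_mulVec] using this

lemma pFam_eq (hn : 1 ≤ n) (hpd : (Hmat G δ).PosDef) (hGsym : G.IsSymm) {lam1 : ℝ}
    (hδ : 0 ≤ δ) (hmax : ∀ μ ∈ spectrum ℝ G, μ ≤ lam1) (hA1 : 0 < 1 - δ * lam1)
    (hdl : 0 ≤ δ * lam1) {η : ℝ} (hη : η < 2 - 2 * δ * lam1) (a c : Fin n → ℝ) :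
    a - pFam G δ a c η = zf G δ (a - c) η := by
  have hs : 0 < 2 - η := by linarith
  set H := Hmat G δ with hHdef
  set N : Matrix (Fin n) (Fin n) ℝ := 1 - (2 * δ / (2 - η)) • G with hNdef
  have h2d : (2 - η) * (2 * δ / (2 - η)) = 2 * δ := by field_simp
  have hNH : ((2 - η) • N) * H = Mm G δ η := by
    have hN2 : (2 - η) • N = (2 - η) • (1 : Matrix (Fin n) (Fin n) ℝ) - (2 * δ) • G := by
      rw [hNdef, smul_sub, smul_smul, h2d]
    rw [hN2, Matrix.sub_mul, Matrix.smul_mul, Matrix.smul_mul, Matrix.one_mul, Mm]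
    have h1 : (1 - δ • G) * H = 1 := left_inv_H hn hpd
    rw [← h1, Matrix.sub_mul, Matrix.smul_mul, Matrix.one_mul]
    module
  have hMdet : IsUnit (Mm G δ η).det := Mm_isUnit_det hn hpd hGsym hδ hmax hA1 hη
  have hNdet : IsUnit N.det := by
    have hdet1 : ((2 - η) • N).det * H.det = (Mm G δ η).det := by
      rw [← Matrix.det_mul, hNH]
    have hdetsmul : ((2 - η) • N).det = (2 - η) ^ n * N.det := by
      rw [Matrix.det_smul, Fintype.card_fin]
    rw [isUnit_iff_ne_zero]
    intro h0
    rw [hdetsmul, h0, mul_zero, zero_mul] at hdet1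
    exact (isUnit_iff_ne_zero.1 hMdet) hdet1.symm
  have hHN : H * N = N * H := by
    rw [hNdef]
    have := comm_GH hn hpd
    rw [Matrix.mul_sub, Matrix.sub_mul, Matrix.mul_one, Matrix.one_mul,
      Matrix.mul_smul, Matrix.smul_mul, this]
  have hMNinv : Mm G δ η * N⁻¹ = (2 - η) • H := by
    rw [← hNH, Matrix.smul_mul, Matrix.smul_mul, Matrix.mul_assoc,
      comm_nonsing_inv hNdet hHN, ← Matrix.mul_assoc,
      Matrix.mul_nonsing_inv _ hNdet, Matrix.one_mul]
  have hsplit : a - pFam G δ a c η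
      = (1/2 : ℝ) • (a - c) + (η / (2 - η)) • (N⁻¹ *ᵥ ((1/2 : ℝ) • (a - c))) := by
    rw [pFam, pUR, ← hNdef]
    funext i
    simp only [Pi.sub_apply, Pi.add_apply, Pi.smul_apply, smul_eq_mul]
    ring
  apply mulVec_cancel hMdet
  rw [Mz_eq hn hpd hGsym hδ hmax hA1 hη, hsplit, mulVec_add, mulVec_smul, mulVec_smul,
    mulVec_mulVec, hMNinv]
  have hMb : Mm G δ η *ᵥ (a - c) = (2:ℝ) • (a - c) - η • (H *ᵥ (a - c)) := by
    rw [Mm, sub_mulVec, smul_mulVec, smul_mulVec, one_mulVec]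
  rw [hMb, smul_mulVec, mulVec_smul]
  funext i
  simp only [Pi.add_apply, Pi.smul_apply, Pi.sub_apply, smul_eq_mul]
  field_simp
  ring

noncomputable def phiF {n : ℕ} (G : Matrix (Fin n) (Fin n) ℝ) (δ : ℝ)
    (b : Fin n → ℝ) (η : ℝ) : ℝ :=
  (b - zf G δ b η) ⬝ᵥ (Hmat G δ *ᵥ zf G δ b η)

lemma phi_contOn (hn : 1 ≤ n) (hpd : (Hmat G δ).PosDef) (hGsym : G.IsSymm) {lam1 : ℝ}
    (hδ : 0 ≤ δ) (hmax : ∀ μ ∈ spectrum ℝ G, μ ≤ lam1) (hA1 : 0 < 1 - δ * lam1)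
    (b : Fin n → ℝ) :
    ContinuousOn (phiF G δ b) (Set.Iio (2 - 2 * δ * lam1)) := by
  intro η0 hη0
  apply ContinuousAt.continuousWithinAt
  have hMc : Continuous (fun η : ℝ => Mm G δ η) := by
    apply Continuous.sub continuous_const
    exact continuous_id.smul continuous_const
  have hdetc : Continuous fun η : ℝ => (Mm G δ η).det := hMc.matrix_det
  have hadjc : Continuous fun η : ℝ => (Mm G δ η).adjugate := hMc.matrix_adjugate
  have hdetne : (Mm G δ η0).det ≠ 0 :=
    (Mm_pd hn hpd hGsym hδ hmax hA1 hη0).det_pos.ne'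
  have hinvc : ContinuousAt (fun η : ℝ => (Mm G δ η)⁻¹) η0 := by
    have heq : (fun η : ℝ => (Mm G δ η)⁻¹)
        = fun η : ℝ => ((Mm G δ η).det)⁻¹ • (Mm G δ η).adjugate := by
      funext η
      rw [Matrix.inv_def, Ring.inverse_eq_inv]
    rw [heq]
    exact (hdetc.continuousAt.inv₀ hdetne).smul hadjc.continuousAt
  have hzc : ContinuousAt (zf G δ b) η0 := by
    have hout : Continuous (fun A : Matrix (Fin n) (Fin n) ℝ => A *ᵥ b) :=
      continuous_id.matrix_mulVec continuous_const
    exact hout.continuousAt.comp hinvc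
  have houter : Continuous (fun v : Fin n → ℝ => (b - v) ⬝ᵥ (Hmat G δ *ᵥ v)) :=
    (continuous_const.sub continuous_id).dotProduct
      (continuous_const.matrix_mulVec continuous_id)
  exact houter.continuousAt.comp hzc

lemma zf_zero (hn : 1 ≤ n) (hpd : (Hmat G δ).PosDef) (hGsym : G.IsSymm) {lam1 : ℝ}
    (hδ : 0 ≤ δ) (hmax : ∀ μ ∈ spectrum ℝ G, μ ≤ lam1) (hA1 : 0 < 1 - δ * lam1)
    (b : Fin n → ℝ) : zf G δ b 0 = (1/2 : ℝ) • b := by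
  have h0 : (0:ℝ) < 2 - 2 * δ * lam1 := by linarith
  have := Mz_eq hn hpd hGsym hδ hmax hA1 h0 b
  rw [Mm, zero_smul, sub_zero] at this
  rw [smul_mulVec, one_mulVec] at this
  funext i
  have := congrFun this i
  simp only [Pi.smul_apply, smul_eq_mul] at this ⊢
  linarith

lemma phi_zero (hn : 1 ≤ n) (hpd : (Hmat G δ).PosDef) (hGsym : G.IsSymm) {lam1 : ℝ}
    (hδ : 0 ≤ δ) (hmax : ∀ μ ∈ spectrum ℝ G, μ ≤ lam1) (hA1 : 0 < 1 - δ * lam1)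
    (b : Fin n → ℝ) :
    phiF G δ b 0 = ((1/2 : ℝ) • b) ⬝ᵥ (Hmat G δ *ᵥ ((1/2 : ℝ) • b)) := by
  rw [phiF, zf_zero hn hpd hGsym hδ hmax hA1]
  congr 1
  funext i
  simp only [Pi.sub_apply, Pi.smul_apply, smul_eq_mul]
  ring

lemma profit_eq (a c p : Fin n → ℝ) :
    profit G δ a c p = ((a - c) - (a - p)) ⬝ᵥ (Hmat G δ *ᵥ (a - p)) := by
  rw [profit]
  congr 1
  funext i
  simp only [Pi.sub_apply]
  ring

lemma profit_pUR_eq (a c : Fin n → ℝ) :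
    profit G δ a c (pUR a c)
      = ((1/2 : ℝ) • (a - c)) ⬝ᵥ (Hmat G δ *ᵥ ((1/2 : ℝ) • (a - c))) := by
  rw [profit]
  have h1 : pUR a c - c = (1/2 : ℝ) • (a - c) := by
    funext i; simp only [pUR, Pi.sub_apply, Pi.add_apply, Pi.smul_apply, smul_eq_mul]; ring
  have h2 : a - pUR a c = (1/2 : ℝ) • (a - c) := by
    funext i; simp only [pUR, Pi.sub_apply, Pi.add_apply, Pi.smul_apply, smul_eq_mul]; ring
  rw [h1, h2]

lemma surplus_eq (hpd : (Hmat G δ).PosDef) (a p : Fin n → ℝ) :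
    surplus G δ a p
      = (1/2 : ℝ) * ((Hmat G δ *ᵥ (a - p)) ⬝ᵥ (Hmat G δ *ᵥ (a - p))) := by
  rw [surplus, ← mulVec_mulVec, herm_pair hpd.1 (a - p) (Hmat G δ *ᵥ (a - p))]

lemma phi_nonpos (hpd : (Hmat G δ).PosDef) {η : ℝ} (hη : 0 < η) {b z : Fin n → ℝ}
    (hMz : Mm G δ η *ᵥ z = b) (hzz : b ⬝ᵥ b ≤ z ⬝ᵥ z) :
    (b - z) ⬝ᵥ (Hmat G δ *ᵥ z) ≤ 0 := by
  have hsm : η • (Hmat G δ *ᵥ z) = (2:ℝ) • z - b := by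
    rw [← hMz, Mm, sub_mulVec, smul_mulVec, smul_mulVec, one_mulVec]
    funext i
    simp only [Pi.sub_apply, Pi.smul_apply, smul_eq_mul]
    ring
  have hmain : η * ((b - z) ⬝ᵥ (Hmat G δ *ᵥ z))
      = 3 * (b ⬝ᵥ z) - b ⬝ᵥ b - 2 * (z ⬝ᵥ z) := by
    calc η * ((b - z) ⬝ᵥ (Hmat G δ *ᵥ z)) = (b - z) ⬝ᵥ (η • (Hmat G δ *ᵥ z)) := by
          rw [dotProduct_smul, smul_eq_mul]
      _ = 3 * (b ⬝ᵥ z) - b ⬝ᵥ b - 2 * (z ⬝ᵥ z) := by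
          rw [hsm, sub_dotProduct, dotProduct_sub, dotProduct_sub, dotProduct_smul,
            dotProduct_smul, smul_eq_mul, smul_eq_mul, dotProduct_comm z b]
          ring
  have hcs : (b ⬝ᵥ z)^2 ≤ (b ⬝ᵥ b) * (z ⬝ᵥ z) := dot_sq_le b z
  have hbb : 0 ≤ b ⬝ᵥ b := dot_self_nonneg b
  have hz2 : 0 ≤ z ⬝ᵥ z := dot_self_nonneg z
  by_contra hcon
  push_neg at hcon
  have h1 : 0 < η * ((b - z) ⬝ᵥ (Hmat G δ *ᵥ z)) := mul_pos hη hcon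
  rw [hmain] at h1
  nlinarith [hcs, hzz, hbb, hz2, mul_nonneg (sub_nonneg.2 hzz) hbb,
    mul_nonneg (sub_nonneg.2 hzz) hz2]

lemma phi_small (hpd : (Hmat G δ).PosDef) {t : ℝ} (ht : 0 < t) {b z : Fin n → ℝ}
    (hMz : Mm G δ (-t) *ᵥ z = b) :
    (b - z) ⬝ᵥ (Hmat G δ *ᵥ z) ≤ (b ⬝ᵥ b) / t := by
  have hsm : t • (Hmat G δ *ᵥ z) = b - (2:ℝ) • z := by
    rw [← hMz, Mm, sub_mulVec, smul_mulVec, smul_mulVec, one_mulVec]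
    funext i
    simp only [Pi.sub_apply, Pi.smul_apply, smul_eq_mul]
    ring
  have hmain : t * ((b - z) ⬝ᵥ (Hmat G δ *ᵥ z))
      = b ⬝ᵥ b - 3 * (b ⬝ᵥ z) + 2 * (z ⬝ᵥ z) := by
    calc t * ((b - z) ⬝ᵥ (Hmat G δ *ᵥ z)) = (b - z) ⬝ᵥ (t • (Hmat G δ *ᵥ z)) := by
          rw [dotProduct_smul, smul_eq_mul]
      _ = b ⬝ᵥ b - 3 * (b ⬝ᵥ z) + 2 * (z ⬝ᵥ z) := by
          rw [hsm, sub_dotProduct, dotProduct_sub, dotProduct_sub, dotProduct_smul,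
            dotProduct_smul, smul_eq_mul, smul_eq_mul, dotProduct_comm z b]
          ring
  have hbz : 2 * (z ⬝ᵥ z) ≤ b ⬝ᵥ z := by
    have hq : 0 ≤ z ⬝ᵥ (Hmat G δ *ᵥ z) := posdef_quad_nonneg hpd z
    have : b ⬝ᵥ z = 2 * (z ⬝ᵥ z) + t * (z ⬝ᵥ (Hmat G δ *ᵥ z)) := by
      have hb2 : b = (2:ℝ) • z + t • (Hmat G δ *ᵥ z) := by
        rw [hsm]; funext i; simp only [Pi.add_apply, Pi.sub_apply, Pi.smul_apply]; ring
      rw [hb2, add_dotProduct, smul_dotProduct, smul_dotProduct, smul_eq_mul, smul_eq_mul,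
        dotProduct_comm (Hmat G δ *ᵥ z) z]
    nlinarith
  rw [le_div_iff₀ ht, mul_comm]
  nlinarith [hmain, hbz, dot_self_nonneg z]
lemma zf_b_eq (hn : 1 ≤ n) (hpd : (Hmat G δ).PosDef) (hGsym : G.IsSymm) {lam1 : ℝ}
    (hδ : 0 ≤ δ) (hmax : ∀ μ ∈ spectrum ℝ G, μ ≤ lam1) (hA1 : 0 < 1 - δ * lam1)
    {η : ℝ} (hη : η < 2 - 2 * δ * lam1) (b : Fin n → ℝ) :
    b = (2:ℝ) • zf G δ b η - η • (Hmat G δ *ᵥ zf G δ b η) := by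
  conv_lhs => rw [← Mz_eq hn hpd hGsym hδ hmax hA1 hη b]
  rw [Mm, sub_mulVec, smul_mulVec, smul_mulVec, one_mulVec]

lemma opt_main (hn : 1 ≤ n) (hpd : (Hmat G δ).PosDef) (hGsym : G.IsSymm) {lam1 : ℝ}
    (hδ : 0 ≤ δ) (hmax : ∀ μ ∈ spectrum ℝ G, μ ≤ lam1) (hA1 : 0 < 1 - δ * lam1)
    {η : ℝ} (hη : η < 2 - 2 * δ * lam1) (b x : Fin n → ℝ)
    (hc : phiF G δ b η ≤ (b - x) ⬝ᵥ (Hmat G δ *ᵥ x)) :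
    (0 < η → (Hmat G δ *ᵥ x) ⬝ᵥ (Hmat G δ *ᵥ x)
        ≤ (Hmat G δ *ᵥ zf G δ b η) ⬝ᵥ (Hmat G δ *ᵥ zf G δ b η)) ∧
    (η < 0 → (Hmat G δ *ᵥ zf G δ b η) ⬝ᵥ (Hmat G δ *ᵥ zf G δ b η)
        ≤ (Hmat G δ *ᵥ x) ⬝ᵥ (Hmat G δ *ᵥ x)) ∧
    (η = 0 → x = zf G δ b η) := by
  set z := zf G δ b η with hzdef
  have hb : b = (2:ℝ) • z - η • (Hmat G δ *ᵥ z) :=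
    zf_b_eq hn hpd hGsym hδ hmax hA1 hη b
  have hid := keyId hpd η b z x hb
  have hQ := keyPSD hn hpd hGsym hδ hmax (le_of_lt hη) (x - z)
  have hphiz : phiF G δ b η = (b - z) ⬝ᵥ (Hmat G δ *ᵥ z) := rfl
  rw [hphiz] at hc
  refine ⟨?_, ?_, ?_⟩
  · intro hpos
    have h2 : (η/2) * ((Hmat G δ *ᵥ x) ⬝ᵥ (Hmat G δ *ᵥ x))
        ≤ (η/2) * ((Hmat G δ *ᵥ z) ⬝ᵥ (Hmat G δ *ᵥ z)) := by linarith
    exact le_of_mul_le_mul_left h2 (by linarith)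
  · intro hneg
    have h2 : (η/2) * ((Hmat G δ *ᵥ x) ⬝ᵥ (Hmat G δ *ᵥ x))
        ≤ (η/2) * ((Hmat G δ *ᵥ z) ⬝ᵥ (Hmat G δ *ᵥ z)) := by linarith
    have h3 := le_of_mul_le_mul_left (a := -(η/2)) (by linarith : -(η/2) * ((Hmat G δ *ᵥ z) ⬝ᵥ (Hmat G δ *ᵥ z)) ≤ -(η/2) * ((Hmat G δ *ᵥ x) ⬝ᵥ (Hmat G δ *ᵥ x))) (by linarith)
    exact h3
  · intro h0
    subst h0
    have hQ0 : (x - z) ⬝ᵥ (Hmat G δ *ᵥ (x - z)) ≤ 0 := by linarith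
    by_contra hne
    have := posdef_quad hpd (sub_ne_zero.2 hne)
    linarith

end main

theorem stmt0 {n : ℕ} (hn : 1 ≤ n)
    (G : Matrix (Fin n) (Fin n) ℝ) (hGsym : G.IsSymm)
    (hGnn : ∀ i j, 0 ≤ G i j) (hGdiag : ∀ i, G i i = 0)
    (δ : ℝ) (hδ : 0 ≤ δ)
    (lam1 : ℝ) (hlam1 : lam1 ∈ spectrum ℝ G)
    (hlam1max : ∀ μ ∈ spectrum ℝ G, μ ≤ lam1)
    (hA1 : 0 < 1 - δ * lam1)
    (hpd : (Hmat G δ).PosDef)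
    (a c : Fin n → ℝ) (hac : ∀ i, c i < a i)
    (τ : ℝ) (hτ : τ ∈ Set.Icc (0 : ℝ) 1) :
    (∃ η ∈ Set.Ico (0 : ℝ) (2 - 2 * δ * lam1),
      profit G δ a c (pFam G δ a c η) = τ * profit G δ a c (pUR a c) ∧
      ∀ p : Fin n → ℝ, τ * profit G δ a c (pUR a c) ≤ profit G δ a c p →
        surplus G δ a p ≤ surplus G δ a (pFam G δ a c η)) ∧
    (τ ∈ Set.Ioc (0 : ℝ) 1 →
      ∃ η ≤ (0 : ℝ),
        profit G δ a c (pFam G δ a c η) = τ * profit G δ a c (pUR a c) ∧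
        ∀ p : Fin n → ℝ, τ * profit G δ a c (pUR a c) ≤ profit G δ a c p →
          surplus G δ a (pFam G δ a c η) ≤ surplus G δ a p) := by
  classical
  set b : Fin n → ℝ := a - c with hbdef
  have i0 : Fin n := ⟨0, hn⟩
  have hbpos : ∀ i, 0 < b i := fun i => sub_pos.2 (hac i)
  have hbne : b ≠ 0 := by
    intro h
    have := congrFun h i0
    exact absurd this (ne_of_gt (hbpos i0))
  -- lam1 ≥ 0
  have hlam1nn : 0 ≤ lam1 := by
    have hray := rayleigh hGsym hlam1max (Pi.single i0 1)
    have h1 : (Pi.single i0 1 : Fin n → ℝ) ⬝ᵥ (G *ᵥ Pi.single i0 1) = G i0 i0 := by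
      simp [dotProduct, mulVec, Pi.single_apply, Finset.sum_ite_eq', Finset.mul_sum]
    have h2 : (Pi.single i0 1 : Fin n → ℝ) ⬝ᵥ (Pi.single i0 1 : Fin n → ℝ) = 1 := by
      simp [dotProduct, Pi.single_apply]
    rw [h1, h2, hGdiag i0, mul_one] at hray
    exact hray
  have hdl : 0 ≤ δ * lam1 := mul_nonneg hδ hlam1nn
  have hbound0 : (0:ℝ) < 2 - 2 * δ * lam1 := by linarith
  -- value of phi at 0 = unrestricted profit
  have hPur : profit G δ a c (pUR a c) = phiF G δ b 0 := by
    rw [profit_pUR_eq, phi_zero hn hpd hGsym hδ hlam1max hA1]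
  have hhalfb : ((1/2 : ℝ) • b) ≠ 0 := by
    intro h
    have := congrFun h i0
    simp only [Pi.smul_apply, smul_eq_mul, Pi.zero_apply] at this
    nlinarith [hbpos i0]
  have hPpos : 0 < phiF G δ b 0 := by
    rw [phi_zero hn hpd hGsym hδ hlam1max hA1]
    exact posdef_quad hpd hhalfb
  have hpfamval : ∀ {η' : ℝ}, η' < 2 - 2 * δ * lam1 →
      profit G δ a c (pFam G δ a c η') = phiF G δ b η' := by
    intro η' hη'
    rw [profit_eq, pFam_eq hn hpd hGsym hδ hlam1max hA1 hdl hη', phiF]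
  have hsurfam : ∀ {η' : ℝ}, η' < 2 - 2 * δ * lam1 →
      surplus G δ a (pFam G δ a c η')
        = (1/2 : ℝ) * ((Hmat G δ *ᵥ zf G δ b η') ⬝ᵥ (Hmat G δ *ᵥ zf G δ b η')) := by
    intro η' hη'
    rw [surplus_eq hpd, pFam_eq hn hpd hGsym hδ hlam1max hA1 hdl hη']
  have hscale : ∀ q : ℝ, 0 < q → τ * q ≤ q := by
    intro q hq
    nlinarith [hτ.2]
  have hprofit_p : ∀ p : Fin n → ℝ,
      profit G δ a c p = (b - (a - p)) ⬝ᵥ (Hmat G δ *ᵥ (a - p)) := fun p => profit_eq a c p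
  constructor
  · -- part (i)
    obtain ⟨v, hvne, hvnn, hveig⟩ := perron hGsym hGnn hlam1 hlam1max
    have hHv : Hmat G δ *ᵥ v = (1 - δ * lam1)⁻¹ • v := by
      have h1 : (1 - δ • G) *ᵥ v = (1 - δ * lam1) • v := by
        rw [sub_mulVec, smul_mulVec, one_mulVec, hveig]
        funext i
        simp only [Pi.sub_apply, Pi.smul_apply, smul_eq_mul]
        ring
      have h2 : Hmat G δ *ᵥ ((1 - δ • G) *ᵥ v) = v := by
        rw [mulVec_mulVec, right_inv_H hn hpd, one_mulVec]
      rw [h1, mulVec_smul] at h2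
      exact ((inv_smul_eq_iff₀ hA1.ne').2 h2.symm).symm
    have hvb : 0 < v ⬝ᵥ b := by
      obtain ⟨j, hj⟩ := Function.ne_iff.1 hvne
      apply Finset.sum_pos'
      · intro i _
        exact mul_nonneg (hvnn i) (hbpos i).le
      · exact ⟨j, Finset.mem_univ j, mul_pos (lt_of_le_of_ne (hvnn j) (Ne.symm hj)) (hbpos j)⟩
    have hvv : 0 < v ⬝ᵥ v := dot_self_pos hvne
    have hbb : 0 < b ⬝ᵥ b := dot_self_pos hbne
    set r0 : ℝ := (v ⬝ᵥ b)^2 / ((v ⬝ᵥ v) * (b ⬝ᵥ b) + 1) with hr0def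
    have hr0pos : 0 < r0 := by positivity
    set ρ : ℝ := min r0 1 with hρdef
    have hρpos : 0 < ρ := lt_min hr0pos one_pos
    have hρ1 : ρ ≤ 1 := min_le_right _ _
    have hρr0 : ρ ≤ r0 := min_le_left _ _
    set η₁ : ℝ := (2 - ρ) * (1 - δ * lam1) with hη₁def
    have hη₁pos : 0 < η₁ := mul_pos (by linarith) hA1
    have hη₁lt : η₁ < 2 - 2 * δ * lam1 := by nlinarith
    have hMzb := Mz_eq hn hpd hGsym hδ hlam1max hA1 hη₁lt b
    set z : Fin n → ℝ := zf G δ b η₁ with hzdef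
    have hMv : Mm G δ η₁ *ᵥ v = ρ • v := by
      rw [Mm, sub_mulVec, smul_mulVec, smul_mulVec, one_mulVec, hHv]
      funext i
      simp only [Pi.sub_apply, Pi.smul_apply, smul_eq_mul]
      have h1mδ : (1 - δ * lam1) ≠ 0 := hA1.ne'
      field_simp
      ring
    have hvz : ρ * (v ⬝ᵥ z) = v ⬝ᵥ b := by
      have hMherm := (Mm_pd hn hpd hGsym hδ hlam1max hA1 hη₁lt).1
      calc ρ * (v ⬝ᵥ z) = (ρ • v) ⬝ᵥ z := by rw [smul_dotProduct, smul_eq_mul]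
        _ = (Mm G δ η₁ *ᵥ v) ⬝ᵥ z := by rw [hMv]
        _ = z ⬝ᵥ (Mm G δ η₁ *ᵥ v) := dotProduct_comm _ _
        _ = v ⬝ᵥ (Mm G δ η₁ *ᵥ z) := herm_pair hMherm z v
        _ = v ⬝ᵥ b := by rw [hMzb]
    have hzz : b ⬝ᵥ b ≤ z ⬝ᵥ z := by
      have hcs : (v ⬝ᵥ z)^2 ≤ (v ⬝ᵥ v) * (z ⬝ᵥ z) := dot_sq_le v z
      have hr0b : r0 * ((v ⬝ᵥ v) * (b ⬝ᵥ b)) ≤ (v ⬝ᵥ b)^2 := by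
        rw [hr0def, div_mul_eq_mul_div, div_le_iff₀ (by positivity)]
        nlinarith [sq_nonneg (v ⬝ᵥ b)]
      -- ρ^2 * vv * bb ≤ ρ * r0 * vv * bb ≤ r0 * vv * bb ≤ vb^2 = ρ^2 (v⬝ᵥz)^2 ≤ ρ^2 vv zz
      have hvb2 : (v ⬝ᵥ b)^2 = ρ^2 * (v ⬝ᵥ z)^2 := by
        rw [← hvz]; ring
      have hρsq : ρ^2 ≤ r0 := by nlinarith [hρr0, hρ1, hρpos.le, hr0pos.le]
      have e1 : ρ^2 * ((v ⬝ᵥ v) * (b ⬝ᵥ b)) ≤ r0 * ((v ⬝ᵥ v) * (b ⬝ᵥ b)) :=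
        mul_le_mul_of_nonneg_right hρsq (mul_pos hvv hbb).le
      have e2 : ρ^2 * ((v ⬝ᵥ v) * (b ⬝ᵥ b)) ≤ ρ^2 * ((v ⬝ᵥ v) * (z ⬝ᵥ z)) := by
        calc ρ^2 * ((v ⬝ᵥ v) * (b ⬝ᵥ b)) ≤ r0 * ((v ⬝ᵥ v) * (b ⬝ᵥ b)) := e1
          _ ≤ (v ⬝ᵥ b)^2 := hr0b
          _ = ρ^2 * (v ⬝ᵥ z)^2 := hvb2
          _ ≤ ρ^2 * ((v ⬝ᵥ v) * (z ⬝ᵥ z)) := mul_le_mul_of_nonneg_left hcs (sq_nonneg ρ)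
      have e3 : (ρ^2 * (v ⬝ᵥ v)) * (b ⬝ᵥ b) ≤ (ρ^2 * (v ⬝ᵥ v)) * (z ⬝ᵥ z) := by
        calc (ρ^2 * (v ⬝ᵥ v)) * (b ⬝ᵥ b) = ρ^2 * ((v ⬝ᵥ v) * (b ⬝ᵥ b)) := by ring
          _ ≤ ρ^2 * ((v ⬝ᵥ v) * (z ⬝ᵥ z)) := e2
          _ = (ρ^2 * (v ⬝ᵥ v)) * (z ⬝ᵥ z) := by ring
      exact le_of_mul_le_mul_left e3 (by positivity)
    have hφneg : phiF G δ b η₁ ≤ 0 := phi_nonpos hpd hη₁pos hMzb hzz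
    -- IVT
    have hconts : ContinuousOn (phiF G δ b) (Set.Icc 0 η₁) := by
      apply (phi_contOn hn hpd hGsym hδ hlam1max hA1 b).mono
      intro x hx
      exact lt_of_le_of_lt hx.2 hη₁lt
    have htmem : τ * phiF G δ b 0 ∈ Set.Icc (phiF G δ b η₁) (phiF G δ b 0) := by
      constructor
      · have : 0 ≤ τ * phiF G δ b 0 := mul_nonneg hτ.1 hPpos.le
        linarith
      · exact hscale _ hPpos
    obtain ⟨η, hηmem, hηval⟩ := intermediate_value_Icc' hη₁pos.le hconts htmem
    have hηlt : η < 2 - 2 * δ * lam1 := lt_of_le_of_lt hηmem.2 hη₁lt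
    refine ⟨η, ⟨hηmem.1, hηlt⟩, ?_, ?_⟩
    · rw [hpfamval hηlt, hηval, hPur]
    · intro p hp
      have hc : phiF G δ b η ≤ (b - (a - p)) ⬝ᵥ (Hmat G δ *ᵥ (a - p)) := by
        rw [hηval, ← hprofit_p p, ← hPur]
        exact hp
      obtain ⟨h1, _, h3⟩ := opt_main hn hpd hGsym hδ hlam1max hA1 hηlt b (a - p) hc
      rcases hηmem.1.lt_or_eq with hη0 | hη0
      · rw [surplus_eq hpd, hsurfam hηlt]
        have := h1 hη0
        linarith
      · have hxz := h3 hη0.symm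
        rw [surplus_eq hpd, hsurfam hηlt, hxz]
  · -- part (ii)
    intro hτ2
    have hτpos : 0 < τ := hτ2.1
    have htargetpos : 0 < τ * phiF G δ b 0 := mul_pos hτpos hPpos
    set t : ℝ := (b ⬝ᵥ b) / (τ * phiF G δ b 0) + 1 with htdef
    have hbb : 0 ≤ b ⬝ᵥ b := dot_self_nonneg b
    have ht : 0 < t := by positivity
    have hηlt2 : -t < 2 - 2 * δ * lam1 := by linarith
    have hMzb := Mz_eq hn hpd hGsym hδ hlam1max hA1 hηlt2 b
    have hφsmall : phiF G δ b (-t) ≤ (b ⬝ᵥ b) / t := phi_small hpd ht hMzb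
    have hφlt : phiF G δ b (-t) ≤ τ * phiF G δ b 0 := by
      have hdivlt : (b ⬝ᵥ b) / t ≤ τ * phiF G δ b 0 := by
        rw [div_le_iff₀ ht, htdef]
        have h1 : (b ⬝ᵥ b) / (τ * phiF G δ b 0) * (τ * phiF G δ b 0) = b ⬝ᵥ b := by
          field_simp
        nlinarith [htargetpos]
      linarith
    have hconts : ContinuousOn (phiF G δ b) (Set.Icc (-t) 0) := by
      apply (phi_contOn hn hpd hGsym hδ hlam1max hA1 b).mono
      intro x hx
      exact lt_of_le_of_lt hx.2 hbound0
    have htmem : τ * phiF G δ b 0 ∈ Set.Icc (phiF G δ b (-t)) (phiF G δ b 0) := by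
      constructor
      · exact hφlt
      · exact hscale _ hPpos
    obtain ⟨η, hηmem, hηval⟩ := intermediate_value_Icc (by linarith : -t ≤ (0:ℝ)) hconts htmem
    have hηlt : η < 2 - 2 * δ * lam1 := lt_of_le_of_lt hηmem.2 hbound0
    refine ⟨η, hηmem.2, ?_, ?_⟩
    · rw [hpfamval hηlt, hηval, hPur]
    · intro p hp
      have hc : phiF G δ b η ≤ (b - (a - p)) ⬝ᵥ (Hmat G δ *ᵥ (a - p)) := by
        rw [hηval, ← hprofit_p p, ← hPur]
        exact hp
      obtain ⟨_, h2, h3⟩ := opt_main hn hpd hGsym hδ hlam1max hA1 hηlt b (a - p) hc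
      rcases hηmem.2.lt_or_eq with hη0 | hη0
      · rw [hsurfam hηlt, surplus_eq hpd]
        have := h2 hη0
        linarith
      · have hxz := h3 hη0
        rw [hsurfam hηlt, surplus_eq hpd, hxz]
end

section
/- For every η ∈ [0, 2 − 2δλ₁), the Ramsey objective p ↦ Π(p) + η·V(p) has a unique global maximizer over ℝⁿ, namely 𝕡(η). -/
open Matrix

section AuxLemmas

lemma dp_symm {n : ℕ} (A : Matrix (Fin n) (Fin n) ℝ) (hA : Aᵀ = A)
    (x y : Fin n → ℝ) : x ⬝ᵥ (A *ᵥ y) = y ⬝ᵥ (A *ᵥ x) := by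
  rw [Matrix.dotProduct_mulVec, ← Matrix.mulVec_transpose, hA, dotProduct_comm]

lemma dp_left {n : ℕ} (A : Matrix (Fin n) (Fin n) ℝ) (hA : Aᵀ = A)
    (x y : Fin n → ℝ) : x ⬝ᵥ (A *ᵥ y) = (A *ᵥ x) ⬝ᵥ y := by
  rw [Matrix.dotProduct_mulVec, ← Matrix.mulVec_transpose, hA]

lemma quad_le {n : ℕ} (A : Matrix (Fin n) (Fin n) ℝ) (hA : A.IsHermitian) (lam1 : ℝ)
    (hmax : ∀ μ ∈ spectrum ℝ A, μ ≤ lam1) (x : Fin n → ℝ) :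
    x ⬝ᵥ (A *ᵥ x) ≤ lam1 * (x ⬝ᵥ x) := by
  set U : Matrix (Fin n) (Fin n) ℝ := (hA.eigenvectorUnitary : Matrix (Fin n) (Fin n) ℝ) with hU
  have hUs : U * star U = 1 := Matrix.mem_unitaryGroup_iff.mp hA.eigenvectorUnitary.2
  set y : Fin n → ℝ := (star U) *ᵥ x with hy
  have hxU : x ᵥ* U = y := by
    rw [hy, Matrix.star_eq_conjTranspose, Matrix.conjTranspose_eq_transpose_of_trivial,
      Matrix.mulVec_transpose]
  have hUy : U *ᵥ y = x := by
    rw [hy, Matrix.mulVec_mulVec, hUs, Matrix.one_mulVec]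
  have key2 : x ⬝ᵥ x = y ⬝ᵥ y := by
    calc x ⬝ᵥ x = x ⬝ᵥ (U *ᵥ y) := by rw [hUy]
    _ = y ⬝ᵥ y := by rw [Matrix.dotProduct_mulVec, hxU]
  have hAx : A *ᵥ x = U *ᵥ (Matrix.diagonal (RCLike.ofReal ∘ hA.eigenvalues) *ᵥ y) := by
    conv_lhs => rw [hA.spectral_theorem, Unitary.conjStarAlgAut_apply]
    rw [← Matrix.mulVec_mulVec, ← Matrix.mulVec_mulVec, hy]
  have key : x ⬝ᵥ (A *ᵥ x) = ∑ i, hA.eigenvalues i * (y i) ^ 2 := by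
    rw [hAx, Matrix.dotProduct_mulVec, hxU]
    simp [Matrix.mulVec_diagonal, dotProduct]
    exact Finset.sum_congr rfl fun i _ => by ring
  rw [key, key2, dotProduct, Finset.mul_sum]
  apply Finset.sum_le_sum
  intro i _
  have h1 : hA.eigenvalues i ≤ lam1 := hmax _ (hA.eigenvalues_mem_spectrum_real i)
  nlinarith [sq_nonneg (y i)]

lemma shifted_posdef {n : ℕ} (G : Matrix (Fin n) (Fin n) ℝ) (hG : G.IsHermitian)
    (lam1 : ℝ)
    (hquad : ∀ x : Fin n → ℝ, x ⬝ᵥ (G *ᵥ x) ≤ lam1 * (x ⬝ᵥ x))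
    (t cst : ℝ) (ht : 0 ≤ t) (h : t * lam1 < cst) :
    (cst • (1 : Matrix (Fin n) (Fin n) ℝ) - t • G).PosDef := by
  have hGt : Gᵀ = G := by
    have := hG.eq; rwa [Matrix.conjTranspose_eq_transpose_of_trivial] at this
  refine Matrix.PosDef.of_dotProduct_mulVec_pos ?_ ?_
  · simp [Matrix.IsHermitian, Matrix.conjTranspose_sub, Matrix.conjTranspose_smul,
      Matrix.conjTranspose_eq_transpose_of_trivial, hGt]
  · intro x hx
    have hnn : (0:ℝ) ≤ x ⬝ᵥ x := Finset.sum_nonneg fun i _ => mul_self_nonneg (x i)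
    have hxx : 0 < x ⬝ᵥ x :=
      lt_of_le_of_ne hnn (Ne.symm ((dotProduct_self_eq_zero (v := x)).not.mpr hx))
    have h1 : t * (x ⬝ᵥ (G *ᵥ x)) ≤ t * (lam1 * (x ⬝ᵥ x)) :=
      mul_le_mul_of_nonneg_left (hquad x) ht
    have hexp : star x ⬝ᵥ ((cst • (1 : Matrix (Fin n) (Fin n) ℝ) - t • G) *ᵥ x)
        = cst * (x ⬝ᵥ x) - t * (x ⬝ᵥ (G *ᵥ x)) := by
      simp [Matrix.sub_mulVec, Matrix.smul_mulVec, dotProduct_sub, dotProduct_smul,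
        Matrix.one_mulVec, smul_eq_mul]
    rw [hexp]
    nlinarith

lemma expand_lemma {n : ℕ} (H HH : Matrix (Fin n) (Fin n) ℝ)
    (hHt : Hᵀ = H) (hHHt : HHᵀ = HH) (η : ℝ) (x y r : Fin n → ℝ) :
    (y + r) ⬝ᵥ (H *ᵥ (x - r)) + η * ((1/2 : ℝ) * ((x - r) ⬝ᵥ (HH *ᵥ (x - r))))
      = y ⬝ᵥ (H *ᵥ x) + η * ((1/2 : ℝ) * (x ⬝ᵥ (HH *ᵥ x)))
        + (r ⬝ᵥ (H *ᵥ (x - y)) - η * (r ⬝ᵥ (HH *ᵥ x)))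
        - (r ⬝ᵥ (H *ᵥ r) - η / 2 * (r ⬝ᵥ (HH *ᵥ r))) := by
  simp only [Matrix.mulVec_sub, dotProduct_sub, sub_dotProduct, add_dotProduct]
  rw [dp_symm H hHt y r, dp_symm HH hHHt x r]
  ring

end AuxLemmas

theorem stmt1 {n : ℕ} (hn : 1 ≤ n)
    (G : Matrix (Fin n) (Fin n) ℝ) (hGsym : G.IsSymm)
    (hGnn : ∀ i j, 0 ≤ G i j) (hGdiag : ∀ i, G i i = 0)
    (δ : ℝ) (hδ : 0 ≤ δ)
    (lam1 : ℝ) (hlam1 : lam1 ∈ spectrum ℝ G)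
    (hlam1max : ∀ μ ∈ spectrum ℝ G, μ ≤ lam1)
    (hA1 : 0 < 1 - δ * lam1)
    (hpd : (Hmat G δ).PosDef)
    (a c : Fin n → ℝ) (hac : ∀ i, c i < a i) :
    ∀ η ∈ Set.Ico (0 : ℝ) (2 - 2 * δ * lam1),
      (∀ p : Fin n → ℝ,
        profit G δ a c p + η * surplus G δ a p ≤
          profit G δ a c (pFam G δ a c η) + η * surplus G δ a (pFam G δ a c η)) ∧
      (∀ p : Fin n → ℝ,
        profit G δ a c p + η * surplus G δ a p =
          profit G δ a c (pFam G δ a c η) + η * surplus G δ a (pFam G δ a c η) →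
        p = pFam G δ a c η) := by
  intro η hη
  obtain ⟨hη0, hη2⟩ := hη
  have hGt : Gᵀ = G := hGsym
  have hGh : G.IsHermitian := by
    rwa [Matrix.IsHermitian, Matrix.conjTranspose_eq_transpose_of_trivial]
  have hquad : ∀ x : Fin n → ℝ, x ⬝ᵥ (G *ᵥ x) ≤ lam1 * (x ⬝ᵥ x) :=
    quad_le G hGh lam1 hlam1max
  -- lam1 is nonnegative
  have hlam1nn : 0 ≤ lam1 := by
    have h0 := hquad (Pi.single ⟨0, hn⟩ 1)
    simp [Matrix.mulVec_single, dotProduct_single, Pi.single_apply, hGdiag] at h0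
    linarith
  have h2η : 0 < 2 - η := by nlinarith [mul_nonneg hδ hlam1nn]
  -- the matrix H
  set H : Matrix (Fin n) (Fin n) ℝ := Hmat G δ with hHdef
  have hHt : Hᵀ = H := by
    have := hpd.1.eq
    rwa [Matrix.conjTranspose_eq_transpose_of_trivial] at this
  have hHHt : (H * H)ᵀ = H * H := by rw [Matrix.transpose_mul, hHt]
  -- invertibility of 1 - δ • G
  have hIdG : (1 - δ • G).PosDef := by
    have := shifted_posdef G hGh lam1 hquad δ 1 hδ (by linarith)
    simpa using this
  have hdet1 : IsUnit (1 - δ • G).det := hIdG.det_pos.ne'.isUnit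
  have hH1 : H * (1 - δ • G) = 1 := by
    rw [hHdef, Hmat]; exact Matrix.nonsing_inv_mul _ hdet1
  -- the matrix K
  set K : Matrix (Fin n) (Fin n) ℝ := 1 - (2 * δ / (2 - η)) • G with hKdef
  have ht2 : 0 ≤ 2 * δ / (2 - η) := div_nonneg (by linarith) h2η.le
  have hKpd : K.PosDef := by
    have := shifted_posdef G hGh lam1 hquad (2 * δ / (2 - η)) 1 ht2 (by
      rw [div_mul_eq_mul_div, div_lt_one h2η]; linarith)
    simpa [hKdef] using this
  have hdetK : IsUnit K.det := hKpd.det_pos.ne'.isUnit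
  have hKinv : K * K⁻¹ = 1 := Matrix.mul_nonsing_inv _ hdetK
  -- the shift vector q
  set d : Fin n → ℝ := a - c with hd
  set q : Fin n → ℝ := -(η / (2 - η)) • (K⁻¹ *ᵥ ((1/2 : ℝ) • d)) with hq
  set p0 : Fin n → ℝ := pFam G δ a c η with hp0
  have hp0q : p0 = pUR a c + q := by
    rw [hp0, pFam, hq, hd, hKdef]
    module
  have hKq : K *ᵥ q = -(η / (2 - η)) • ((1/2 : ℝ) • d) := by
    rw [hq, Matrix.mulVec_smul, Matrix.mulVec_mulVec, hKinv, Matrix.one_mulVec]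
  have hKq' : q - (2 * δ / (2 - η)) • (G *ᵥ q) = (-(η / (2 - η)) * (1/2 : ℝ)) • d := by
    rw [hKdef] at hKq
    rw [Matrix.sub_mulVec, Matrix.one_mulVec, Matrix.smul_mulVec] at hKq
    rw [hKq, smul_smul]
  have c1 : (2 - η) * (2 * δ / (2 - η)) = 2 * δ := by field_simp
  have c2 : (2 - η) * (-(η / (2 - η)) * (1/2 : ℝ)) = -(η / 2) := by field_simp
  have claim1 : (2 - η) • q - (2 * δ) • (G *ᵥ q) = (-(η / 2)) • d := by
    have h' := congrArg (fun w : Fin n → ℝ => (2 - η) • w) hKq'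
    simp only [smul_sub, smul_smul] at h'
    rwa [c1, c2] at h'
  -- the vectors s and v
  set s : Fin n → ℝ := a + c - (2 : ℝ) • p0 with hs
  set v : Fin n → ℝ := a - p0 with hv
  have hs2 : s = (-2 : ℝ) • q := by rw [hs, hp0q, pUR]; module
  have hv2 : v = (1/2 : ℝ) • d - q := by rw [hv, hp0q, pUR, hd]; module
  have hsv : (1 - δ • G) *ᵥ s = η • v := by
    rw [hs2, hv2, Matrix.sub_mulVec, Matrix.one_mulVec, Matrix.smul_mulVec,
      Matrix.mulVec_smul]
    linear_combination (norm := module) (-1 : ℝ) • claim1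
  have hkey : η • (H *ᵥ v) = s := by
    calc η • (H *ᵥ v) = H *ᵥ (η • v) := (Matrix.mulVec_smul _ _ _).symm
    _ = H *ᵥ ((1 - δ • G) *ᵥ s) := by rw [hsv]
    _ = (H * (1 - δ • G)) *ᵥ s := Matrix.mulVec_mulVec _ _ _
    _ = s := by rw [hH1, Matrix.one_mulVec]
  -- positivity of the quadratic form
  set B : Matrix (Fin n) (Fin n) ℝ := (1 - η/2) • (1 : Matrix (Fin n) (Fin n) ℝ) - δ • G
    with hBdef
  have hBpd : B.PosDef := shifted_posdef G hGh lam1 hquad δ (1 - η/2) hδ (by linarith)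
  have hBalt : B = (1 - δ • G) - (η/2) • (1 : Matrix (Fin n) (Fin n) ℝ) := by
    rw [hBdef]; module
  have hMBH : H * B * H = H - (η/2) • (H * H) := by
    calc H * B * H = (H * (1 - δ • G) - (η/2) • (H * 1)) * H := by
          rw [hBalt, Matrix.mul_sub, Matrix.mul_smul]
    _ = (1 - (η/2) • H) * H := by rw [hH1, Matrix.mul_one]
    _ = H - (η/2) • (H * H) := by rw [Matrix.sub_mul, Matrix.one_mul, Matrix.smul_mul]
  have quadpos : ∀ r : Fin n → ℝ, r ≠ 0 →
      0 < r ⬝ᵥ (H *ᵥ r) - η / 2 * (r ⬝ᵥ ((H * H) *ᵥ r)) := by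
    intro r hr
    have hr1 : r ⬝ᵥ (H *ᵥ r) - η / 2 * (r ⬝ᵥ ((H * H) *ᵥ r))
        = r ⬝ᵥ ((H * B * H) *ᵥ r) := by
      rw [hMBH, Matrix.sub_mulVec, dotProduct_sub, Matrix.smul_mulVec,
        dotProduct_smul, smul_eq_mul]
    have hHr : H *ᵥ r ≠ 0 := by
      intro h0
      have hpos := hpd.dotProduct_mulVec_pos hr
      rw [star_trivial, h0, dotProduct_zero] at hpos
      exact lt_irrefl 0 hpos
    have hBpos := hBpd.dotProduct_mulVec_pos hHr
    rw [star_trivial] at hBpos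
    rw [hr1, ← Matrix.mulVec_mulVec, ← Matrix.mulVec_mulVec, dp_left H hHt]
    exact hBpos
  -- the master expansion
  have hF : ∀ p : Fin n → ℝ,
      profit G δ a c p + η * surplus G δ a p
        = (profit G δ a c p0 + η * surplus G δ a p0)
          + ((p - p0) ⬝ᵥ (H *ᵥ s) - η * ((p - p0) ⬝ᵥ ((H * H) *ᵥ v)))
          - ((p - p0) ⬝ᵥ (H *ᵥ (p - p0)) - η / 2 * ((p - p0) ⬝ᵥ ((H * H) *ᵥ (p - p0)))) := by
    intro p
    have hx : a - p = v - (p - p0) := by rw [hv]; module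
    have hyy : p - c = (p0 - c) + (p - p0) := by module
    have hvy : v - (p0 - c) = s := by rw [hv, hs]; module
    simp only [profit, surplus, ← hHdef]
    rw [hx, hyy, expand_lemma H (H * H) hHt hHHt η v (p0 - c) (p - p0), hvy, hv]
  have hzero : ∀ p : Fin n → ℝ,
      (p - p0) ⬝ᵥ (H *ᵥ s) - η * ((p - p0) ⬝ᵥ ((H * H) *ᵥ v)) = 0 := by
    intro p
    have : η * ((p - p0) ⬝ᵥ ((H * H) *ᵥ v)) = (p - p0) ⬝ᵥ (H *ᵥ s) := by
      rw [← Matrix.mulVec_mulVec, ← smul_eq_mul, ← dotProduct_smul, ← Matrix.mulVec_smul, hkey]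
    rw [this, sub_self]
  constructor
  · intro p
    rw [hF p, hzero p, add_zero]
    rcases eq_or_ne p p0 with hp | hp
    · simp [hp]
    · have := quadpos (p - p0) (sub_ne_zero.mpr hp)
      linarith
  · intro p hp
    rw [hF p, hzero p, add_zero] at hp
    by_contra hne
    have := quadpos (p - p0) (sub_ne_zero.mpr hne)
    linarith
end

section
/- For every η ∈ [0, 2 − 2δλ₁) and every p ∈ ℝⁿ with V(p) ≥ V(𝕡(η)), it holds that Π(p) ≤ Π(𝕡(η)); moreover Π(p) = Π(𝕡(η)) implies p = 𝕡(η). In other words, 𝕡(η) is the unique maximizer of profit subject to the consumer-surplus floor V(p) ≥ V(𝕡(η)). -/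
open Matrix

lemma aux_smul_one_sub_posSemidef {n : ℕ} {A : Matrix (Fin n) (Fin n) ℝ}
    (hA : A.IsHermitian) (t : ℝ) (h : ∀ μ ∈ spectrum ℝ A, μ ≤ t) :
    (t • (1 : Matrix (Fin n) (Fin n) ℝ) - A).PosSemidef := by
  have hU : (hA.eigenvectorUnitary : Matrix (Fin n) (Fin n) ℝ) *
      (star (hA.eigenvectorUnitary : Matrix (Fin n) (Fin n) ℝ)) = 1 :=
    Unitary.mul_star_self_of_mem hA.eigenvectorUnitary.2
  have h2 : (diagonal (fun i => t - hA.eigenvalues i) : Matrix (Fin n) (Fin n) ℝ)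
      = t • 1 - diagonal (RCLike.ofReal ∘ hA.eigenvalues) := by
    ext i j
    by_cases hij : i = j <;>
      simp [hij, diagonal, Matrix.sub_apply, Matrix.smul_apply, Matrix.one_apply]
  have key : t • (1 : Matrix (Fin n) (Fin n) ℝ) - A =
      (hA.eigenvectorUnitary : Matrix (Fin n) (Fin n) ℝ) *
        diagonal (fun i => t - hA.eigenvalues i) *
        (star (hA.eigenvectorUnitary : Matrix (Fin n) (Fin n) ℝ)) := by
    rw [h2, mul_sub, sub_mul,
      ← Unitary.conjStarAlgAut_apply (S := ℝ) (x := diagonal (RCLike.ofReal ∘ hA.eigenvalues)),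
      ← hA.spectral_theorem, mul_smul_comm, smul_mul_assoc, mul_one, hU]
  rw [key]
  refine (posSemidef_diagonal_iff.mpr ?_).mul_mul_conjTranspose_same _
  intro i
  exact sub_nonneg.2 (h _ (hA.eigenvalues_mem_spectrum_real i))

lemma aux_posDef_smul {n : ℕ} {A : Matrix (Fin n) (Fin n) ℝ} (hA : A.PosDef)
    {k : ℝ} (hk : 0 < k) : (k • A).PosDef := by
  refine PosDef.of_dotProduct_mulVec_pos ?_ fun x hx => ?_
  · have h1 := hA.1
    unfold Matrix.IsHermitian at *
    rw [conjTranspose_smul, h1, star_trivial]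
  · rw [smul_mulVec, dotProduct_smul, smul_eq_mul]
    exact mul_pos hk (hA.dotProduct_mulVec_pos hx)

lemma aux_posSemidef_smul {n : ℕ} {A : Matrix (Fin n) (Fin n) ℝ} (hA : A.PosSemidef)
    {k : ℝ} (hk : 0 ≤ k) : (k • A).PosSemidef := by
  refine PosSemidef.of_dotProduct_mulVec_nonneg ?_ fun x => ?_
  · have h1 := hA.1
    unfold Matrix.IsHermitian at *
    rw [conjTranspose_smul, h1, star_trivial]
  · rw [smul_mulVec, dotProduct_smul, smul_eq_mul]
    exact mul_nonneg hk (hA.dotProduct_mulVec_nonneg x)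

lemma quad_expand {n : ℕ} (A : Matrix (Fin n) (Fin n) ℝ)
    (hA : ∀ v x : Fin n → ℝ, v ⬝ᵥ (A *ᵥ x) = x ⬝ᵥ (A *ᵥ v)) (w u : Fin n → ℝ) :
    (w - u) ⬝ᵥ (A *ᵥ (w - u)) = w ⬝ᵥ (A *ᵥ w) - 2 * (u ⬝ᵥ (A *ᵥ w)) + u ⬝ᵥ (A *ᵥ u) := by
  rw [mulVec_sub, dotProduct_sub, sub_dotProduct, sub_dotProduct, hA w u]
  ring

theorem stmt2 {n : ℕ} (hn : 1 ≤ n)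
    (G : Matrix (Fin n) (Fin n) ℝ) (hGsym : G.IsSymm)
    (hGnn : ∀ i j, 0 ≤ G i j) (hGdiag : ∀ i, G i i = 0)
    (δ : ℝ) (hδ : 0 ≤ δ)
    (lam1 : ℝ) (hlam1 : lam1 ∈ spectrum ℝ G)
    (hlam1max : ∀ μ ∈ spectrum ℝ G, μ ≤ lam1)
    (hA1 : 0 < 1 - δ * lam1)
    (hpd : (Hmat G δ).PosDef)
    (a c : Fin n → ℝ) (hac : ∀ i, c i < a i) :
    ∀ η ∈ Set.Ico (0 : ℝ) (2 - 2 * δ * lam1),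
      ∀ p : Fin n → ℝ, surplus G δ a (pFam G δ a c η) ≤ surplus G δ a p →
        profit G δ a c p ≤ profit G δ a c (pFam G δ a c η) ∧
        (profit G δ a c p = profit G δ a c (pFam G δ a c η) → p = pFam G δ a c η) := by
  intro η hη p hsur
  obtain ⟨hη0, hη2⟩ := hη
  have hGh : G.IsHermitian := by
    unfold Matrix.IsHermitian
    rw [conjTranspose_eq_transpose_of_trivial]
    exact hGsym
  have hC : (lam1 • (1 : Matrix (Fin n) (Fin n) ℝ) - G).PosSemidef :=
    aux_smul_one_sub_posSemidef hGh lam1 hlam1max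
  have hlam1nn : 0 ≤ lam1 := by
    have h0 := hC.dotProduct_mulVec_nonneg (Pi.single ⟨0, hn⟩ 1)
    simpa [sub_mulVec, smul_mulVec, one_mulVec, dotProduct_sub, dotProduct_smul,
      Matrix.mulVec_single, hGdiag, star_trivial] using h0
  have hδl : 0 ≤ δ * lam1 := mul_nonneg hδ hlam1nn
  have h2η : 0 < 2 - η := by nlinarith
  set H : Matrix (Fin n) (Fin n) ℝ := Hmat G δ with hHdef
  set B : Matrix (Fin n) (Fin n) ℝ := (1 - η/2) • 1 - δ • G with hBdef
  set M : Matrix (Fin n) (Fin n) ℝ := 1 - (2 * δ / (2 - η)) • G with hMdef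
  -- B is positive definite
  have hBpd : B.PosDef := by
    have hdecomp : B = (1 - η/2 - δ*lam1) •
        (1 : Matrix (Fin n) (Fin n) ℝ) + δ • (lam1 • 1 - G) := by
      rw [hBdef]; module
    rw [hdecomp]
    have hε : (0:ℝ) < 1 - η/2 - δ*lam1 := by nlinarith
    exact (aux_posDef_smul Matrix.PosDef.one hε).add_posSemidef (aux_posSemidef_smul hC hδ)
  -- B = ((2-η)/2) • M
  have hBM : B = ((2 - η)/2) • M := by
    rw [hBdef, hMdef]
    have hc : (2 - η)/2 * (2 * δ / (2 - η)) = δ := by field_simp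
    rw [smul_sub, smul_smul, hc]
    congr 1
    have : (2 - η)/2 = 1 - η/2 := by ring
    rw [this]
  have hMpd : M.PosDef := by
    have h := hBpd
    rw [hBM] at h
    have h2 : M = (2/(2 - η)) • (((2 - η)/2) • M) := by
      rw [smul_smul]
      have : 2/(2 - η) * ((2 - η)/2) = 1 := by field_simp
      rw [this, one_smul]
    rw [h2]
    exact aux_posDef_smul h (by positivity)
  have hMdet : IsUnit M.det := (Matrix.isUnit_iff_isUnit_det M).mp hMpd.isUnit
  have hMM : M * M⁻¹ = 1 := mul_nonsing_inv M hMdet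
  have hMinvM : M⁻¹ * M = 1 := nonsing_inv_mul M hMdet
  -- H basics
  have hIG : IsUnit ((1 : Matrix (Fin n) (Fin n) ℝ) - δ • G) := by
    rw [← Matrix.isUnit_nonsing_inv_iff]
    exact hpd.isUnit
  have hIGdet : IsUnit ((1 : Matrix (Fin n) (Fin n) ℝ) - δ • G).det :=
    (Matrix.isUnit_iff_isUnit_det _).mp hIG
  have hH1 : H * ((1 : Matrix (Fin n) (Fin n) ℝ) - δ • G) = 1 := by
    rw [hHdef]; exact nonsing_inv_mul _ hIGdet
  have h1H : ((1 : Matrix (Fin n) (Fin n) ℝ) - δ • G) * H = 1 := by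
    rw [hHdef]; exact mul_nonsing_inv _ hIGdet
  have hHsym : Hᵀ = H := by
    have := hpd.isHermitian
    rwa [Matrix.IsHermitian, conjTranspose_eq_transpose_of_trivial] at this
  have hGH : G * H = H * G := by
    have h1 : ((1 : Matrix (Fin n) (Fin n) ℝ) - δ • G) * G
        = G * ((1 : Matrix (Fin n) (Fin n) ℝ) - δ • G) := by
      rw [sub_mul, mul_sub, one_mul, mul_one, smul_mul_assoc, mul_smul_comm]
    calc G * H = H * (((1 : Matrix (Fin n) (Fin n) ℝ) - δ • G) * G) * H := by
          rw [← mul_assoc, hH1, one_mul]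
      _ = H * (G * ((1 : Matrix (Fin n) (Fin n) ℝ) - δ • G)) * H := by rw [h1]
      _ = H * G * (((1 : Matrix (Fin n) (Fin n) ℝ) - δ • G) * H) := by
          simp only [mul_assoc]
      _ = H * G := by rw [h1H, mul_one]
  have hMH : M * H = H * M := by
    rw [hMdef, sub_mul, mul_sub, one_mul, mul_one, smul_mul_assoc, mul_smul_comm, hGH]
  have hMinvH : H * M⁻¹ = M⁻¹ * H := by
    calc H * M⁻¹ = M⁻¹ * (M * H) * M⁻¹ := by rw [← mul_assoc, hMinvM, one_mul]
      _ = M⁻¹ * (H * M) * M⁻¹ := by rw [hMH]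
      _ = M⁻¹ * H * (M * M⁻¹) := by simp only [mul_assoc]
      _ = M⁻¹ * H := by rw [hMM, mul_one]
  -- vectors
  set s : Fin n → ℝ := (1/2 : ℝ) • (a - c) with hsdef
  set w : Fin n → ℝ := a - pFam G δ a c η with hwdef
  have hw : w = s + (η/(2 - η)) • (M⁻¹ *ᵥ s) := by
    rw [hwdef]
    unfold pFam pUR
    ext i
    simp [hsdef, Pi.smul_apply, Pi.sub_apply, Pi.add_apply]
    ring
  -- stationarity: Amat *ᵥ w = H *ᵥ s
  have e2 : M *ᵥ s = s - (2 * δ / (2 - η)) • (G *ᵥ s) := by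
    rw [hMdef, sub_mulVec, one_mulVec, smul_mulVec]
  have hMw : M *ᵥ w = (2/(2 - η)) • (s - δ • (G *ᵥ s)) := by
    have h5 : M *ᵥ ((η/(2 - η)) • (M⁻¹ *ᵥ s)) = (η/(2 - η)) • s := by
      rw [mulVec_smul, mulVec_mulVec, hMM, one_mulVec]
    rw [hw, mulVec_add, h5, e2]
    ext i
    simp [Pi.smul_apply, Pi.sub_apply, Pi.add_apply]
    field_simp
    ring
  have hHs : H *ᵥ (s - δ • (G *ᵥ s)) = s := by
    have h3 : s - δ • (G *ᵥ s) = ((1 : Matrix (Fin n) (Fin n) ℝ) - δ • G) *ᵥ s := by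
      rw [sub_mulVec, one_mulVec, smul_mulVec]
    rw [h3, mulVec_mulVec, hH1, one_mulVec]
  have hHMw : M *ᵥ (H *ᵥ w) = (2/(2 - η)) • s := by
    rw [mulVec_mulVec, hMH, ← mulVec_mulVec, hMw, mulVec_smul, hHs]
  have hHw : H *ᵥ w = (2/(2 - η)) • (M⁻¹ *ᵥ s) := by
    have h4 := congrArg (fun v => M⁻¹ *ᵥ v) hHMw
    simpa [mulVec_mulVec, ← mul_assoc, hMinvM, one_mul, one_mulVec, mulVec_smul] using h4
  have hkey1 : w - (η/2) • (H *ᵥ w) = s := by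
    rw [hHw, hw]
    ext i
    simp [Pi.smul_apply, Pi.sub_apply, Pi.add_apply]
    field_simp
    ring
  set Amat : Matrix (Fin n) (Fin n) ℝ := H - (η/2) • (H * H) with hAdef
  have hAw : Amat *ᵥ w = H *ᵥ s := by
    rw [hAdef, sub_mulVec, smul_mulVec, ← mulVec_mulVec, ← mulVec_smul,
      ← mulVec_sub, hkey1]
  have hAsym : Amatᵀ = Amat := by
    rw [hAdef, transpose_sub, transpose_smul, transpose_mul, hHsym]
  have hdotH : ∀ v x : Fin n → ℝ, v ⬝ᵥ (H *ᵥ x) = x ⬝ᵥ (H *ᵥ v) := by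
    intro v x
    rw [Matrix.dotProduct_mulVec, ← Matrix.mulVec_transpose, hHsym, dotProduct_comm]
  have hdotA : ∀ v x : Fin n → ℝ, v ⬝ᵥ (Amat *ᵥ x) = x ⬝ᵥ (Amat *ᵥ v) := by
    intro v x
    rw [Matrix.dotProduct_mulVec, ← Matrix.mulVec_transpose, hAsym, dotProduct_comm]
  -- profit/surplus in terms of Amat
  have hPhi : ∀ q : Fin n → ℝ, profit G δ a c q + η * surplus G δ a q
      = (a - c) ⬝ᵥ (H *ᵥ (a - q)) - (a - q) ⬝ᵥ (Amat *ᵥ (a - q)) := by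
    intro q
    unfold profit surplus
    rw [← hHdef]
    have hqc : q - c = (a - c) - (a - q) := by ext i; simp
    rw [hqc, sub_dotProduct, hAdef, sub_mulVec, dotProduct_sub, smul_mulVec,
      dotProduct_smul, smul_eq_mul]
    ring
  have hac2 : a - c = (2:ℝ) • s := by
    rw [hsdef]; ext i; simp
  have hbH : ∀ x : Fin n → ℝ, (a - c) ⬝ᵥ (H *ᵥ x) = 2 * (x ⬝ᵥ (Amat *ᵥ w)) := by
    intro x
    rw [hac2, smul_dotProduct, hAw, hdotH s x, smul_eq_mul]
  set E : ℝ := (w - (a - p)) ⬝ᵥ (Amat *ᵥ (w - (a - p))) with hEdef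
  have hEexp : E = w ⬝ᵥ (Amat *ᵥ w) - 2 * ((a - p) ⬝ᵥ (Amat *ᵥ w))
      + (a - p) ⬝ᵥ (Amat *ᵥ (a - p)) :=
    quad_expand Amat hdotA w (a - p)
  have hkey : (profit G δ a c p + η * surplus G δ a p) + E
      = profit G δ a c (pFam G δ a c η) + η * surplus G δ a (pFam G δ a c η) := by
    rw [hPhi p, hPhi (pFam G δ a c η), ← hwdef, hEexp, hbH (a - p), hbH w]
    ring
  -- positivity of E
  have hAquad : ∀ x : Fin n → ℝ, x ⬝ᵥ (Amat *ᵥ x) = (H *ᵥ x) ⬝ᵥ (B *ᵥ (H *ᵥ x)) := by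
    intro x
    have hB' : B = ((1 : Matrix (Fin n) (Fin n) ℝ) - δ • G) - (η/2) • 1 := by
      rw [hBdef]; module
    have hABH : Amat = H * B * H := by
      rw [hAdef, hB', mul_sub, hH1, mul_smul_comm, mul_one, sub_mul, one_mul,
        smul_mul_assoc]
    rw [hABH, ← Matrix.mulVec_mulVec, ← Matrix.mulVec_mulVec, Matrix.dotProduct_mulVec,
      ← Matrix.mulVec_transpose, hHsym]
  have hHx : ∀ x : Fin n → ℝ, x ≠ 0 → H *ᵥ x ≠ 0 := by
    intro x hx
    exact (Matrix.mulVec_injective_iff_isUnit.mpr hpd.isUnit).ne_iff' (by simp) |>.2 hx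
  have hEnn : 0 ≤ E := by
    rw [hEdef, hAquad]
    have := hBpd.posSemidef.dotProduct_mulVec_nonneg (H *ᵥ (w - (a - p)))
    simpa using this
  have hEpos : p ≠ pFam G δ a c η → 0 < E := by
    intro hne
    have hx : w - (a - p) ≠ 0 := by
      rw [hwdef]
      intro h0
      apply hne
      have : p - pFam G δ a c η = 0 := by
        rw [← h0]; ext i; simp
      ext i
      have := congrFun this i
      simpa [sub_eq_zero] using this
    rw [hEdef, hAquad]
    have := hBpd.dotProduct_mulVec_pos (hHx _ hx)
    simpa using this
  have hmul : η * surplus G δ a (pFam G δ a c η) ≤ η * surplus G δ a p :=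
    mul_le_mul_of_nonneg_left hsur hη0
  constructor
  · linarith
  · intro heq
    by_contra hne
    have := hEpos hne
    linarith
end

section
/- Let K ⊆ ℝⁿ be nonempty, closed and convex. Then: (i) for every p ∈ ℝⁿ, Π(p) = Π(p^ur) − (p − p^ur)ᵀ H (p − p^ur); (ii) there is a unique p* ∈ K maximizing Π over K, and a price p ∈ K maximizes Π over K if and only if it minimizes (q − p^ur)ᵀ H (q − p^ur) over q ∈ K; that is, the firm's optimal regulated price is the projection of p^ur onto K in the norm induced by the positive definite matrix H. -/
open Matrix

open Filter

-- auxiliary lemmas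
section Aux

variable {n : ℕ}

private lemma dot_symm (H : Matrix (Fin n) (Fin n) ℝ) (hH : H.IsHermitian)
    (x y : Fin n → ℝ) : x ⬝ᵥ (H *ᵥ y) = y ⬝ᵥ (H *ᵥ x) := by
  rw [Matrix.dotProduct_mulVec, ← Matrix.mulVec_transpose]
  rw [show Hᵀ = H from by ext i j; simpa using congrFun (congrFun hH i) j]
  exact dotProduct_comm _ _

private lemma dot_pos (H : Matrix (Fin n) (Fin n) ℝ) (hpd : H.PosDef)
    {x : Fin n → ℝ} (hx : x ≠ 0) : 0 < x ⬝ᵥ (H *ᵥ x) := by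
  simpa using hpd.dotProduct_mulVec_pos hx

private lemma dot_smul_smul (H : Matrix (Fin n) (Fin n) ℝ) (s : ℝ) (x : Fin n → ℝ) :
    (s • x) ⬝ᵥ (H *ᵥ (s • x)) = s ^ 2 * (x ⬝ᵥ (H *ᵥ x)) := by
  rw [Matrix.mulVec_smul, smul_dotProduct, dotProduct_smul]
  simp only [smul_eq_mul]; ring

private lemma dot_expand_add (H : Matrix (Fin n) (Fin n) ℝ) (u v : Fin n → ℝ) :
    (u + v) ⬝ᵥ (H *ᵥ (u + v)) =
      u ⬝ᵥ (H *ᵥ u) + u ⬝ᵥ (H *ᵥ v) + v ⬝ᵥ (H *ᵥ u) + v ⬝ᵥ (H *ᵥ v) := by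
  simp only [Matrix.mulVec_add, add_dotProduct, dotProduct_add]
  ring

private lemma dot_expand_sub (H : Matrix (Fin n) (Fin n) ℝ) (u v : Fin n → ℝ) :
    (u - v) ⬝ᵥ (H *ᵥ (u - v)) =
      u ⬝ᵥ (H *ᵥ u) - u ⬝ᵥ (H *ᵥ v) - v ⬝ᵥ (H *ᵥ u) + v ⬝ᵥ (H *ᵥ v) := by
  simp only [Matrix.mulVec_sub, sub_dotProduct, dotProduct_sub]
  ring

end Aux

theorem stmt4' {n : ℕ} (hn : 1 ≤ n)
    (G : Matrix (Fin n) (Fin n) ℝ)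
    (δ : ℝ)
    (hpd : (Hmat G δ).PosDef)
    (a c : Fin n → ℝ)
    (K : Set (Fin n → ℝ)) (hKne : K.Nonempty) (hKcl : IsClosed K) (hKconv : Convex ℝ K) :
    (∀ p : Fin n → ℝ,
      profit G δ a c p =
        profit G δ a c (pUR a c) - (p - pUR a c) ⬝ᵥ (Hmat G δ *ᵥ (p - pUR a c))) ∧
    (∃! pstar : Fin n → ℝ, pstar ∈ K ∧ ∀ q ∈ K, profit G δ a c q ≤ profit G δ a c pstar) ∧
    (∀ p ∈ K,
      ((∀ q ∈ K, profit G δ a c q ≤ profit G δ a c p) ↔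
        (∀ q ∈ K, (p - pUR a c) ⬝ᵥ (Hmat G δ *ᵥ (p - pUR a c)) ≤
          (q - pUR a c) ⬝ᵥ (Hmat G δ *ᵥ (q - pUR a c))))) := by
  set H := Hmat G δ with hHdef
  have hsym := dot_symm H hpd.1
  set p0 : Fin n → ℝ := pUR a c with hp0
  set d : Fin n → ℝ := (1 / 2 : ℝ) • (a - c) with hd
  set f : (Fin n → ℝ) → ℝ := fun p => (p - p0) ⬝ᵥ (H *ᵥ (p - p0)) with hf
  -- Part (i)
  have part1 : ∀ p : Fin n → ℝ,
      profit G δ a c p = profit G δ a c p0 - f p := by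
    intro p
    have h1 : p - c = (p - p0) + d := by
      rw [hd, hp0, pUR]; module
    have h2 : a - p = d - (p - p0) := by
      rw [hd, hp0, pUR]; module
    have h3 : p0 - c = d := by rw [hd, hp0, pUR]; module
    have h4 : a - p0 = d := by rw [hd, hp0, pUR]; module
    have hP0 : profit G δ a c p0 = d ⬝ᵥ (H *ᵥ d) := by
      rw [profit, h3, h4]
    rw [profit, h1, h2, hP0]
    have expand : ∀ u : Fin n → ℝ,
        (u + d) ⬝ᵥ (H *ᵥ (d - u)) = d ⬝ᵥ (H *ᵥ d) - u ⬝ᵥ (H *ᵥ u) := by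
      intro u
      have h := hsym u d
      simp only [Matrix.mulVec_sub, dotProduct_sub, add_dotProduct]
      linarith
    exact expand (p - p0)
  -- equivalence of maximizing profit and minimizing f
  have key : ∀ p q : Fin n → ℝ,
      (profit G δ a c q ≤ profit G δ a c p ↔ f p ≤ f q) := by
    intro p q
    rw [part1 p, part1 q]
    constructor <;> intro h <;> linarith
  -- continuity of f
  have hfc : Continuous f := by
    rw [hf]
    simp only [dotProduct, Matrix.mulVec]
    fun_prop
  -- coercivity
  haveI : Nonempty (Fin n) := ⟨⟨0, hn⟩⟩
  have hscomp : IsCompact (Metric.sphere (0 : Fin n → ℝ) 1) := isCompact_sphere _ _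
  have hsne : (Metric.sphere (0 : Fin n → ℝ) 1).Nonempty :=
    NormedSpace.sphere_nonempty.2 zero_le_one
  have hgc : Continuous fun x : Fin n → ℝ => x ⬝ᵥ (H *ᵥ x) := by
    simp only [dotProduct, Matrix.mulVec]
    fun_prop
  obtain ⟨x0, hx0S, hx0min⟩ := hscomp.exists_isMinOn hsne hgc.continuousOn
  have hx0ne : x0 ≠ 0 := by
    intro h
    have := mem_sphere_zero_iff_norm.1 hx0S
    rw [h] at this; simp at this
  have hε : 0 < x0 ⬝ᵥ (H *ᵥ x0) := dot_pos H hpd hx0ne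
  set ε : ℝ := x0 ⬝ᵥ (H *ᵥ x0) with hεdef
  have hlow : ∀ x : Fin n → ℝ, ε * ‖x‖ ^ 2 ≤ x ⬝ᵥ (H *ᵥ x) := by
    intro x
    rcases eq_or_ne x 0 with rfl | hx
    · simp
    · have hnx : (0 : ℝ) < ‖x‖ := norm_pos_iff.2 hx
      have huS : (‖x‖⁻¹ • x) ∈ Metric.sphere (0 : Fin n → ℝ) 1 :=
        mem_sphere_zero_iff_norm.2 (norm_smul_inv_norm hx)
      have h1 : ε ≤ (‖x‖⁻¹ • x) ⬝ᵥ (H *ᵥ (‖x‖⁻¹ • x)) := hx0min huS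
      rw [dot_smul_smul] at h1
      have h2 : (‖x‖⁻¹) ^ 2 * ‖x‖ ^ 2 = 1 := by
        field_simp
      calc ε * ‖x‖ ^ 2 ≤ ((‖x‖⁻¹) ^ 2 * (x ⬝ᵥ (H *ᵥ x))) * ‖x‖ ^ 2 :=
            mul_le_mul_of_nonneg_right h1 (sq_nonneg _)
        _ = (x ⬝ᵥ (H *ᵥ x)) * ((‖x‖⁻¹) ^ 2 * ‖x‖ ^ 2) := by ring
        _ = x ⬝ᵥ (H *ᵥ x) := by rw [h2, mul_one]
  have hcoer : Tendsto f (cocompact (Fin n → ℝ)) atTop := by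
    apply tendsto_atTop_mono (fun p => hlow (p - p0))
    have h1 : Tendsto (fun p : Fin n → ℝ => ‖p - p0‖) (cocompact _) atTop := by
      apply tendsto_atTop_mono (fun p => norm_sub_norm_le p p0)
      have h2 : Tendsto (fun p : Fin n → ℝ => ‖p‖) (cocompact _) atTop :=
        tendsto_norm_cocompact_atTop
      simpa [sub_eq_add_neg] using tendsto_atTop_add_const_right _ (-‖p0‖) h2
    exact ((tendsto_pow_atTop two_ne_zero).const_mul_atTop hε).comp h1
  -- existence of a minimizer of f on K
  obtain ⟨k0, hk0⟩ := hKne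
  have hev : ∀ᶠ x in cocompact (Fin n → ℝ) ⊓ Filter.principal K, f k0 ≤ f x :=
    (hcoer.eventually (eventually_ge_atTop (f k0))).filter_mono inf_le_left
  obtain ⟨pstar, hpK, hpmin⟩ := hfc.continuousOn.exists_isMinOn' hKcl hk0 hev
  -- uniqueness of minimizer
  have huniq : ∀ y ∈ K, (∀ q ∈ K, f y ≤ f q) → y = pstar := by
    intro y hyK hymin
    by_contra hne
    have hfy : f y = f pstar := le_antisymm (hymin pstar hpK) (hpmin hyK)
    have hmK : ((1 / 2 : ℝ) • pstar + (1 / 2 : ℝ) • y) ∈ K :=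
      hKconv hpK hyK (by norm_num) (by norm_num) (by norm_num)
    set u : Fin n → ℝ := pstar - p0
    set v : Fin n → ℝ := y - p0
    have hm0 : ((1 / 2 : ℝ) • pstar + (1 / 2 : ℝ) • y) - p0 = (1 / 2 : ℝ) • (u + v) := by
      simp only [u, v]; module
    have hfm : f ((1 / 2 : ℝ) • pstar + (1 / 2 : ℝ) • y) =
        (1 / 4 : ℝ) * ((u + v) ⬝ᵥ (H *ᵥ (u + v))) := by
      rw [hf]
      simp only [hm0]
      rw [dot_smul_smul]
      norm_num
    have hle : f pstar ≤ f ((1 / 2 : ℝ) • pstar + (1 / 2 : ℝ) • y) := hpmin hmK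
    have hfu : f pstar = u ⬝ᵥ (H *ᵥ u) := rfl
    have hfv : f y = v ⬝ᵥ (H *ᵥ v) := rfl
    have huv : u - v = pstar - y := by simp only [u, v]; module
    have hpos : 0 < (u - v) ⬝ᵥ (H *ᵥ (u - v)) := by
      apply dot_pos H hpd
      rw [huv]
      exact sub_ne_zero.2 (fun h => hne (h ▸ rfl))
    have hsuv := hsym u v
    have hea := dot_expand_add H u v
    have hes := dot_expand_sub H u v
    rw [hfm] at hle
    linarith [hfy, hfu, hfv, hsuv, hea, hes, hle, hpos]
  refine ⟨part1, ⟨pstar, ⟨hpK, fun q hq => (key pstar q).2 (hpmin hq)⟩, ?_⟩, ?_⟩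
  · rintro y ⟨hyK, hymax⟩
    exact huniq y hyK (fun q hq => (key y q).1 (hymax q hq))
  · intro p hpK'
    constructor
    · intro h q hq
      exact (key p q).1 (h q hq)
    · intro h q hq
      exact (key p q).2 (h q hq)


theorem stmt4 {n : ℕ} (hn : 1 ≤ n)
    (G : Matrix (Fin n) (Fin n) ℝ) (hGsym : G.IsSymm)
    (hGnn : ∀ i j, 0 ≤ G i j) (hGdiag : ∀ i, G i i = 0)
    (δ : ℝ) (hδ : 0 ≤ δ)
    (lam1 : ℝ) (hlam1 : lam1 ∈ spectrum ℝ G)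
    (hlam1max : ∀ μ ∈ spectrum ℝ G, μ ≤ lam1)
    (hA1 : 0 < 1 - δ * lam1)
    (hpd : (Hmat G δ).PosDef)
    (a c : Fin n → ℝ) (hac : ∀ i, c i < a i)
    (K : Set (Fin n → ℝ)) (hKne : K.Nonempty) (hKcl : IsClosed K) (hKconv : Convex ℝ K) :
    (∀ p : Fin n → ℝ,
      profit G δ a c p =
        profit G δ a c (pUR a c) - (p - pUR a c) ⬝ᵥ (Hmat G δ *ᵥ (p - pUR a c))) ∧
    (∃! pstar : Fin n → ℝ, pstar ∈ K ∧ ∀ q ∈ K, profit G δ a c q ≤ profit G δ a c pstar) ∧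
    (∀ p ∈ K,
      ((∀ q ∈ K, profit G δ a c q ≤ profit G δ a c p) ↔
        (∀ q ∈ K, (p - pUR a c) ⬝ᵥ (Hmat G δ *ᵥ (p - pUR a c)) ≤
          (q - pUR a c) ⬝ᵥ (Hmat G δ *ᵥ (q - pUR a c))))) :=
  stmt4' hn G δ hpd a c K hKne hKcl hKconv
end

section
/- Fix a price vector p ∈ ℝⁿ. As δ tends to 1/λ₁ from the left (with δ ranging over [0, 1/λ₁)), the profit ratio converges: R_Π(p, δ) → 1 − 𝒜(p)², and the consumer-surplus ratio converges: R_V(p, δ) → (1 − 𝒜(p))². -/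
open Matrix

/-- The all-ones vector 𝟙. -/
def onesVec (n : ℕ) : Fin n → ℝ := fun _ => 1

/-- The sufficient statistic 𝒜(p) = ⟨w₁, p − p^ur⟩ / ⟨w₁, (a−c)/2⟩. -/
noncomputable def AAstat {n : ℕ} (w1 a c p : Fin n → ℝ) : ℝ :=
  (w1 ⬝ᵥ (p - pUR a c)) / (w1 ⬝ᵥ ((1 / 2 : ℝ) • (a - c)))

/-- Profit ratio R_Π(p, δ). -/
noncomputable def Rpi {n : ℕ} (G : Matrix (Fin n) (Fin n) ℝ) (δ : ℝ)
    (a c p : Fin n → ℝ) : ℝ :=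
  profit G δ a c p / profit G δ a c (pUR a c)

/-- Consumer-surplus ratio R_V(p, δ). -/
noncomputable def Rv {n : ℕ} (G : Matrix (Fin n) (Fin n) ℝ) (δ : ℝ)
    (a c p : Fin n → ℝ) : ℝ :=
  surplus G δ a p / surplus G δ a (pUR a c)

section aux

variable {n : ℕ}

lemma expand_basis (w : Fin n → Fin n → ℝ)
    (horth : ∀ i j, w i ⬝ᵥ w j = if i = j then (1:ℝ) else 0)
    (y : Fin n → ℝ) : ∑ i, (w i ⬝ᵥ y) • w i = y := by
  have h1 : (Matrix.of w) * (Matrix.of w)ᵀ = 1 := by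
    ext i j
    simpa [Matrix.mul_apply, dotProduct, Matrix.one_apply] using horth i j
  have h2 := mul_eq_one_comm.mp h1
  funext k
  have hk : ∀ j, (∑ i, w i k * w i j) = if k = j then (1:ℝ) else 0 := by
    intro j
    have := congrFun (congrFun h2 k) j
    simpa [Matrix.mul_apply, Matrix.one_apply] using this
  calc (∑ i, (w i ⬝ᵥ y) • w i) k
      = ∑ i, ∑ j, (w i j * y j) * w i k := by
        simp [Finset.sum_apply, dotProduct, Finset.sum_mul]
    _ = ∑ j, (∑ i, w i k * w i j) * y j := by
        rw [Finset.sum_comm]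
        refine Finset.sum_congr rfl fun j _ => ?_
        rw [Finset.sum_mul]
        exact Finset.sum_congr rfl fun i _ => by ring
    _ = y k := by simp [hk]

lemma dot_sum_smul (x : Fin n → ℝ) (c : Fin n → ℝ) (w : Fin n → Fin n → ℝ) :
    x ⬝ᵥ (∑ i, c i • w i) = ∑ i, c i * (w i ⬝ᵥ x) := by
  calc x ⬝ᵥ (∑ i, c i • w i) = ∑ k, ∑ i, x k * (c i * w i k) := by
        simp [dotProduct, Finset.sum_apply, Finset.mul_sum]
    _ = ∑ i, ∑ k, x k * (c i * w i k) := Finset.sum_comm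
    _ = ∑ i, c i * (w i ⬝ᵥ x) := by
        refine Finset.sum_congr rfl fun i _ => ?_
        rw [dotProduct, Finset.mul_sum]
        exact Finset.sum_congr rfl fun k _ => by ring

lemma hmat_eig (G : Matrix (Fin n) (Fin n) ℝ) (δ : ℝ)
    (hpdδ : (Hmat G δ).PosDef)
    (v : Fin n → ℝ) (μ : ℝ) (heig : G *ᵥ v = μ • v)
    (hpos : 0 < 1 - δ * μ) :
    Hmat G δ *ᵥ v = (1 - δ * μ)⁻¹ • v := by
  have hdet : ((1 : Matrix (Fin n) (Fin n) ℝ) - δ • G).det ≠ 0 := by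
    intro h
    have hd := hpdδ.det_pos
    rw [Hmat, Matrix.det_nonsing_inv, h] at hd
    simp at hd
  have hinv : Hmat G δ * (1 - δ • G) = 1 :=
    Matrix.nonsing_inv_mul _ (isUnit_iff_ne_zero.mpr hdet)
  have hMv : ((1 : Matrix (Fin n) (Fin n) ℝ) - δ • G) *ᵥ v = (1 - δ * μ) • v := by
    rw [Matrix.sub_mulVec, Matrix.one_mulVec, Matrix.smul_mulVec, heig]
    funext k; simp; ring
  have key : (1 - δ * μ) • (Hmat G δ *ᵥ v) = v := by
    rw [← Matrix.mulVec_smul, ← hMv, Matrix.mulVec_mulVec, hinv, Matrix.one_mulVec]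
  exact (eq_inv_smul_iff₀ hpos.ne').mpr key

lemma dot_hmat (G : Matrix (Fin n) (Fin n) ℝ) (δ : ℝ)
    (hpdδ : (Hmat G δ).PosDef)
    (w : Fin n → Fin n → ℝ) (lam : Fin n → ℝ)
    (horth : ∀ i j, w i ⬝ᵥ w j = if i = j then (1:ℝ) else 0)
    (heig : ∀ i, G *ᵥ w i = lam i • w i)
    (hpos : ∀ i, 0 < 1 - δ * lam i)
    (x y : Fin n → ℝ) :
    x ⬝ᵥ (Hmat G δ *ᵥ y) = ∑ i, (1 - δ * lam i)⁻¹ * ((w i ⬝ᵥ x) * (w i ⬝ᵥ y)) := by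
  conv_lhs => rw [← expand_basis w horth y]
  have step : Hmat G δ *ᵥ (∑ i, (w i ⬝ᵥ y) • w i)
      = ∑ i, ((w i ⬝ᵥ y) * (1 - δ * lam i)⁻¹) • w i := by
    have h1 : Hmat G δ *ᵥ (∑ i, (w i ⬝ᵥ y) • w i)
        = ∑ i, Hmat G δ *ᵥ ((w i ⬝ᵥ y) • w i) := by
      have := map_sum (Matrix.mulVecLin (Hmat G δ)) (fun i => (w i ⬝ᵥ y) • w i) Finset.univ
      simp only [Matrix.mulVecLin_apply] at this
      exact this
    rw [h1]
    refine Finset.sum_congr rfl fun i _ => ?_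
    rw [Matrix.mulVec_smul, hmat_eig G δ hpdδ (w i) (lam i) (heig i) (hpos i), smul_smul]
  rw [step, dot_sum_smul]
  exact Finset.sum_congr rfl fun i _ => by rw [dotProduct_comm (w i) x]; ring

lemma dot_wi_hmat (G : Matrix (Fin n) (Fin n) ℝ) (δ : ℝ)
    (hpdδ : (Hmat G δ).PosDef)
    (w : Fin n → Fin n → ℝ) (lam : Fin n → ℝ)
    (horth : ∀ i j, w i ⬝ᵥ w j = if i = j then (1:ℝ) else 0)
    (heig : ∀ i, G *ᵥ w i = lam i • w i)
    (hpos : ∀ i, 0 < 1 - δ * lam i)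
    (i : Fin n) (y : Fin n → ℝ) :
    w i ⬝ᵥ (Hmat G δ *ᵥ y) = (1 - δ * lam i)⁻¹ * (w i ⬝ᵥ y) := by
  rw [dot_hmat G δ hpdδ w lam horth heig hpos (w i) y]
  rw [Finset.sum_eq_single i]
  · rw [horth i i]; simp
  · intro j _ hji
    rw [horth j i, if_neg hji]; ring
  · intro h; exact absurd (Finset.mem_univ i) h

lemma dot_hmat_sq (G : Matrix (Fin n) (Fin n) ℝ) (δ : ℝ)
    (hpdδ : (Hmat G δ).PosDef)
    (w : Fin n → Fin n → ℝ) (lam : Fin n → ℝ)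
    (horth : ∀ i j, w i ⬝ᵥ w j = if i = j then (1:ℝ) else 0)
    (heig : ∀ i, G *ᵥ w i = lam i • w i)
    (hpos : ∀ i, 0 < 1 - δ * lam i)
    (x : Fin n → ℝ) :
    x ⬝ᵥ ((Hmat G δ * Hmat G δ) *ᵥ x)
      = ∑ i, ((1 - δ * lam i)⁻¹)^2 * (w i ⬝ᵥ x)^2 := by
  rw [← Matrix.mulVec_mulVec, dot_hmat G δ hpdδ w lam horth heig hpos x (Hmat G δ *ᵥ x)]
  refine Finset.sum_congr rfl fun i _ => ?_
  rw [dot_wi_hmat G δ hpdδ w lam horth heig hpos i x]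
  ring

end aux

theorem stmt8 {n : ℕ} [NeZero n]
    (G : Matrix (Fin n) (Fin n) ℝ) (hGsym : G.IsSymm)
    (hGnn : ∀ i j, 0 ≤ G i j) (hGdiag : ∀ i, G i i = 0)
    (w : Fin n → Fin n → ℝ) (lam : Fin n → ℝ)
    (horth : ∀ i j, w i ⬝ᵥ w j = if i = j then (1 : ℝ) else 0)
    (heig : ∀ i, G *ᵥ w i = lam i • w i)
    (hgap : ∀ i, i ≠ 0 → lam i < lam 0)
    (hlam0 : 0 < lam 0)
    (hw0 : ∀ k, 0 < w 0 k)
    (hpd : ∀ δ ∈ Set.Ico (0 : ℝ) (1 / lam 0), (Hmat G δ).PosDef)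
    (a c : Fin n → ℝ) (hac : ∀ i, c i < a i)
    (p : Fin n → ℝ) :
    Filter.Tendsto (fun δ : ℝ => Rpi G δ a c p)
      (nhdsWithin (1 / lam 0) (Set.Ico 0 (1 / lam 0)))
      (nhds (1 - (AAstat (w 0) a c p) ^ 2)) ∧
    Filter.Tendsto (fun δ : ℝ => Rv G δ a c p)
      (nhdsWithin (1 / lam 0) (Set.Ico 0 (1 / lam 0)))
      (nhds ((1 - AAstat (w 0) a c p) ^ 2)) := by
  classical
  have hne : Nonempty (Fin n) := ⟨0⟩
  set l := nhdsWithin (1 / lam 0) (Set.Ico (0:ℝ) (1 / lam 0)) with hldef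
  -- positivity of 1 - δ λ_i on the interval
  have hposΔ : ∀ δ ∈ Set.Ico (0:ℝ) (1 / lam 0), ∀ i, 0 < 1 - δ * lam i := by
    intro δ hδ i
    have h1 : lam i ≤ lam 0 := by
      by_cases hi : i = 0
      · rw [hi]
      · exact (hgap i hi).le
    have h2 : δ * lam i ≤ δ * lam 0 := mul_le_mul_of_nonneg_left h1 hδ.1
    have h3 : δ * lam 0 < 1 := (lt_div_iff₀ hlam0).mp hδ.2
    linarith
  -- vector identities
  have hpc : p - c = (p - pUR a c) + (1/2:ℝ) • (a - c) := by
    funext k; simp [pUR]; ring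
  have hap : a - p = (1/2:ℝ) • (a - c) - (p - pUR a c) := by
    funext k; simp [pUR]; ring
  have hdur1 : pUR a c - c = (1/2:ℝ) • (a - c) := by
    funext k; simp [pUR]; ring
  have hdur2 : a - pUR a c = (1/2:ℝ) • (a - c) := by
    funext k; simp [pUR]; ring
  have hU0 : w 0 ⬝ᵥ (p - c)
      = w 0 ⬝ᵥ ((1/2:ℝ) • (a - c)) + w 0 ⬝ᵥ (p - pUR a c) := by
    rw [hpc, dotProduct_add]; ring
  have hV0 : w 0 ⬝ᵥ (a - p)
      = w 0 ⬝ᵥ ((1/2:ℝ) • (a - c)) - w 0 ⬝ᵥ (p - pUR a c) := by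
    rw [hap, dotProduct_sub]
  have hD0 : 0 < w 0 ⬝ᵥ ((1/2:ℝ) • (a - c)) := by
    rw [dotProduct]
    refine Finset.sum_pos (fun k _ => ?_) Finset.univ_nonempty
    have h1 := hw0 k; have h2 := hac k
    have h3 : (0:ℝ) < ((1/2:ℝ) • (a - c)) k := by
      simp only [Pi.smul_apply, Pi.sub_apply, smul_eq_mul]; linarith
    exact mul_pos h1 h3
  -- per-term limits of r_i(δ) = (1-δλ₀)(1-δλ_i)⁻¹
  have hr : ∀ i, Filter.Tendsto (fun δ : ℝ => (1 - δ * lam 0) * (1 - δ * lam i)⁻¹) l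
      (nhds (if i = 0 then 1 else 0)) := by
    intro i
    by_cases hi : i = 0
    · subst hi
      rw [if_pos rfl]
      refine Filter.Tendsto.congr' ?_ tendsto_const_nhds
      filter_upwards [self_mem_nhdsWithin] with δ hδ
      exact (mul_inv_cancel₀ (hposΔ δ hδ 0).ne').symm
    · rw [if_neg hi]
      have h1 : Filter.Tendsto (fun δ : ℝ => 1 - δ * lam 0) l (nhds 0) := by
        have hc : Filter.Tendsto (fun δ : ℝ => 1 - δ * lam 0) (nhds (1/lam 0))
            (nhds (1 - (1/lam 0) * lam 0)) :=
          ((continuous_const.sub (continuous_id.mul continuous_const)).tendsto _)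
        have hval0 : (1:ℝ) - (1/lam 0) * lam 0 = 0 := by field_simp; ring
        rw [hval0] at hc
        exact hc.mono_left nhdsWithin_le_nhds
      have hne2 : 1 - (1/lam 0) * lam i ≠ 0 := by
        have hlt : (1/lam 0) * lam i < 1 := by
          rw [one_div, inv_mul_eq_div]
          exact (div_lt_one hlam0).mpr (hgap i hi)
        linarith
      have h2 : Filter.Tendsto (fun δ : ℝ => (1 - δ * lam i)⁻¹) l
          (nhds ((1 - (1/lam 0) * lam i)⁻¹)) := by
        have hc : Filter.Tendsto (fun δ : ℝ => 1 - δ * lam i) (nhds (1/lam 0))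
            (nhds (1 - (1/lam 0) * lam i)) :=
          ((continuous_const.sub (continuous_id.mul continuous_const)).tendsto _)
        exact (hc.mono_left nhdsWithin_le_nhds).inv₀ hne2
      simpa using h1.mul h2
  have hdenne : (w 0 ⬝ᵥ ((1/2:ℝ) • (a - c))) * (w 0 ⬝ᵥ ((1/2:ℝ) • (a - c))) ≠ 0 := by
    positivity
  ----------------------------------------------------------------
  -- PROFIT part
  have hnum : Filter.Tendsto
      (fun δ : ℝ => ∑ i, (1 - δ * lam 0) * (1 - δ * lam i)⁻¹ *
        ((w i ⬝ᵥ (p - c)) * (w i ⬝ᵥ (a - p)))) l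
      (nhds ((w 0 ⬝ᵥ (p - c)) * (w 0 ⬝ᵥ (a - p)))) := by
    have h := tendsto_finset_sum Finset.univ
      (fun i (_ : i ∈ Finset.univ) =>
        (hr i).mul_const ((w i ⬝ᵥ (p - c)) * (w i ⬝ᵥ (a - p))))
    have hcoll : (∑ i, (if i = (0:Fin n) then (1:ℝ) else 0) *
        ((w i ⬝ᵥ (p - c)) * (w i ⬝ᵥ (a - p))))
        = (w 0 ⬝ᵥ (p - c)) * (w 0 ⬝ᵥ (a - p)) := by
      rw [Finset.sum_eq_single 0]
      · simp
      · intro j _ hj; rw [if_neg hj]; ring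
      · intro h; exact absurd (Finset.mem_univ 0) h
    rwa [hcoll] at h
  have hden : Filter.Tendsto
      (fun δ : ℝ => ∑ i, (1 - δ * lam 0) * (1 - δ * lam i)⁻¹ *
        ((w i ⬝ᵥ ((1/2:ℝ) • (a - c))) * (w i ⬝ᵥ ((1/2:ℝ) • (a - c))))) l
      (nhds ((w 0 ⬝ᵥ ((1/2:ℝ) • (a - c))) * (w 0 ⬝ᵥ ((1/2:ℝ) • (a - c))))) := by
    have h := tendsto_finset_sum Finset.univ
      (fun i (_ : i ∈ Finset.univ) =>
        (hr i).mul_const ((w i ⬝ᵥ ((1/2:ℝ) • (a - c))) * (w i ⬝ᵥ ((1/2:ℝ) • (a - c)))))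
    have hcoll : (∑ i, (if i = (0:Fin n) then (1:ℝ) else 0) *
        ((w i ⬝ᵥ ((1/2:ℝ) • (a - c))) * (w i ⬝ᵥ ((1/2:ℝ) • (a - c)))))
        = (w 0 ⬝ᵥ ((1/2:ℝ) • (a - c))) * (w 0 ⬝ᵥ ((1/2:ℝ) • (a - c))) := by
      rw [Finset.sum_eq_single 0]
      · simp
      · intro j _ hj; rw [if_neg hj]; ring
      · intro h; exact absurd (Finset.mem_univ 0) h
    rwa [hcoll] at h
  have hRpi_lim := hnum.div hden hdenne
  have hevPi : (fun δ : ℝ => (∑ i, (1 - δ * lam 0) * (1 - δ * lam i)⁻¹ *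
        ((w i ⬝ᵥ (p - c)) * (w i ⬝ᵥ (a - p)))) /
      (∑ i, (1 - δ * lam 0) * (1 - δ * lam i)⁻¹ *
        ((w i ⬝ᵥ ((1/2:ℝ) • (a - c))) * (w i ⬝ᵥ ((1/2:ℝ) • (a - c))))))
      =ᶠ[l] (fun δ : ℝ => Rpi G δ a c p) := by
    filter_upwards [self_mem_nhdsWithin] with δ hδ
    have hp := hposΔ δ hδ
    have hpdδ := hpd δ hδ
    have e1 : profit G δ a c p = ∑ i, (1 - δ * lam i)⁻¹ *
        ((w i ⬝ᵥ (p - c)) * (w i ⬝ᵥ (a - p))) :=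
      dot_hmat G δ hpdδ w lam horth heig hp (p - c) (a - p)
    have e2 : profit G δ a c (pUR a c) = ∑ i, (1 - δ * lam i)⁻¹ *
        ((w i ⬝ᵥ ((1/2:ℝ) • (a - c))) * (w i ⬝ᵥ ((1/2:ℝ) • (a - c)))) := by
      rw [profit, hdur1, hdur2]
      exact dot_hmat G δ hpdδ w lam horth heig hp _ _
    have ht : (1 - δ * lam 0) ≠ 0 := (hp 0).ne'
    have key : ∀ X Y : Fin n → ℝ,
        (1 - δ * lam 0) * ∑ i, (1 - δ * lam i)⁻¹ * ((w i ⬝ᵥ X) * (w i ⬝ᵥ Y))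
        = ∑ i, (1 - δ * lam 0) * (1 - δ * lam i)⁻¹ * ((w i ⬝ᵥ X) * (w i ⬝ᵥ Y)) := by
      intro X Y
      rw [Finset.mul_sum]
      exact Finset.sum_congr rfl fun i _ => by ring
    rw [Rpi, e1, e2]
    conv_rhs => rw [← mul_div_mul_left _ _ ht]
    rw [key, key]
  have hvalPi : (w 0 ⬝ᵥ (p - c)) * (w 0 ⬝ᵥ (a - p)) /
      ((w 0 ⬝ᵥ ((1/2:ℝ) • (a - c))) * (w 0 ⬝ᵥ ((1/2:ℝ) • (a - c))))
      = 1 - (AAstat (w 0) a c p) ^ 2 := by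
    rw [AAstat, hU0, hV0]
    set Dv := w 0 ⬝ᵥ ((1/2:ℝ) • (a - c)) with hDv
    set Sv := w 0 ⬝ᵥ (p - pUR a c) with hSv
    have hDne : Dv ≠ 0 := hD0.ne'
    field_simp
    ring
  have hPi : Filter.Tendsto (fun δ : ℝ => Rpi G δ a c p) l
      (nhds (1 - (AAstat (w 0) a c p) ^ 2)) := by
    rw [← hvalPi]
    exact Filter.Tendsto.congr' hevPi hRpi_lim
  ----------------------------------------------------------------
  -- SURPLUS part
  have hnum2 : Filter.Tendsto
      (fun δ : ℝ => ∑ i, (1 - δ * lam 0) * (1 - δ * lam i)⁻¹ *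
        ((1 - δ * lam 0) * (1 - δ * lam i)⁻¹) *
        ((w i ⬝ᵥ (a - p)) * (w i ⬝ᵥ (a - p)))) l
      (nhds ((w 0 ⬝ᵥ (a - p)) * (w 0 ⬝ᵥ (a - p)))) := by
    have h := tendsto_finset_sum Finset.univ
      (fun i (_ : i ∈ Finset.univ) =>
        ((hr i).mul (hr i)).mul_const ((w i ⬝ᵥ (a - p)) * (w i ⬝ᵥ (a - p))))
    have hcoll : (∑ i, (if i = (0:Fin n) then (1:ℝ) else 0) *
        (if i = (0:Fin n) then (1:ℝ) else 0) *
        ((w i ⬝ᵥ (a - p)) * (w i ⬝ᵥ (a - p))))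
        = (w 0 ⬝ᵥ (a - p)) * (w 0 ⬝ᵥ (a - p)) := by
      rw [Finset.sum_eq_single 0]
      · simp
      · intro j _ hj; rw [if_neg hj]; ring
      · intro h; exact absurd (Finset.mem_univ 0) h
    rwa [hcoll] at h
  have hden2 : Filter.Tendsto
      (fun δ : ℝ => ∑ i, (1 - δ * lam 0) * (1 - δ * lam i)⁻¹ *
        ((1 - δ * lam 0) * (1 - δ * lam i)⁻¹) *
        ((w i ⬝ᵥ ((1/2:ℝ) • (a - c))) * (w i ⬝ᵥ ((1/2:ℝ) • (a - c))))) l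
      (nhds ((w 0 ⬝ᵥ ((1/2:ℝ) • (a - c))) * (w 0 ⬝ᵥ ((1/2:ℝ) • (a - c))))) := by
    have h := tendsto_finset_sum Finset.univ
      (fun i (_ : i ∈ Finset.univ) =>
        ((hr i).mul (hr i)).mul_const
          ((w i ⬝ᵥ ((1/2:ℝ) • (a - c))) * (w i ⬝ᵥ ((1/2:ℝ) • (a - c)))))
    have hcoll : (∑ i, (if i = (0:Fin n) then (1:ℝ) else 0) *
        (if i = (0:Fin n) then (1:ℝ) else 0) *
        ((w i ⬝ᵥ ((1/2:ℝ) • (a - c))) * (w i ⬝ᵥ ((1/2:ℝ) • (a - c)))))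
        = (w 0 ⬝ᵥ ((1/2:ℝ) • (a - c))) * (w 0 ⬝ᵥ ((1/2:ℝ) • (a - c))) := by
      rw [Finset.sum_eq_single 0]
      · simp
      · intro j _ hj; rw [if_neg hj]; ring
      · intro h; exact absurd (Finset.mem_univ 0) h
    rwa [hcoll] at h
  have hRv_lim := hnum2.div hden2 hdenne
  have hevV : (fun δ : ℝ => (∑ i, (1 - δ * lam 0) * (1 - δ * lam i)⁻¹ *
        ((1 - δ * lam 0) * (1 - δ * lam i)⁻¹) *
        ((w i ⬝ᵥ (a - p)) * (w i ⬝ᵥ (a - p)))) /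
      (∑ i, (1 - δ * lam 0) * (1 - δ * lam i)⁻¹ *
        ((1 - δ * lam 0) * (1 - δ * lam i)⁻¹) *
        ((w i ⬝ᵥ ((1/2:ℝ) • (a - c))) * (w i ⬝ᵥ ((1/2:ℝ) • (a - c))))))
      =ᶠ[l] (fun δ : ℝ => Rv G δ a c p) := by
    filter_upwards [self_mem_nhdsWithin] with δ hδ
    have hp := hposΔ δ hδ
    have hpdδ := hpd δ hδ
    have e1 : surplus G δ a p = (1/2:ℝ) * ∑ i, ((1 - δ * lam i)⁻¹)^2 *
        (w i ⬝ᵥ (a - p))^2 := by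
      rw [surplus, dot_hmat_sq G δ hpdδ w lam horth heig hp (a - p)]
    have e2 : surplus G δ a (pUR a c) = (1/2:ℝ) * ∑ i, ((1 - δ * lam i)⁻¹)^2 *
        (w i ⬝ᵥ ((1/2:ℝ) • (a - c)))^2 := by
      rw [surplus, hdur2, dot_hmat_sq G δ hpdδ w lam horth heig hp _]
    have ht : (1 - δ * lam 0) ≠ 0 := (hp 0).ne'
    have hu : (2 * (1 - δ * lam 0)^2 : ℝ) ≠ 0 := by positivity
    have key : ∀ X : Fin n → ℝ,
        (2 * (1 - δ * lam 0)^2) * ((1/2:ℝ) * ∑ i, ((1 - δ * lam i)⁻¹)^2 * (w i ⬝ᵥ X)^2)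
        = ∑ i, (1 - δ * lam 0) * (1 - δ * lam i)⁻¹ *
            ((1 - δ * lam 0) * (1 - δ * lam i)⁻¹) * ((w i ⬝ᵥ X) * (w i ⬝ᵥ X)) := by
      intro X
      rw [Finset.mul_sum, Finset.mul_sum]
      exact Finset.sum_congr rfl fun i _ => by ring
    rw [Rv, e1, e2]
    conv_rhs => rw [← mul_div_mul_left _ _ hu]
    rw [key, key]
  have hvalV : (w 0 ⬝ᵥ (a - p)) * (w 0 ⬝ᵥ (a - p)) /
      ((w 0 ⬝ᵥ ((1/2:ℝ) • (a - c))) * (w 0 ⬝ᵥ ((1/2:ℝ) • (a - c))))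
      = (1 - AAstat (w 0) a c p) ^ 2 := by
    rw [AAstat, hV0]
    set Dv := w 0 ⬝ᵥ ((1/2:ℝ) • (a - c)) with hDv
    set Sv := w 0 ⬝ᵥ (p - pUR a c) with hSv
    have hDne : Dv ≠ 0 := hD0.ne'
    field_simp
  have hV : Filter.Tendsto (fun δ : ℝ => Rv G δ a c p) l
      (nhds ((1 - AAstat (w 0) a c p) ^ 2)) := by
    rw [← hvalV]
    exact Filter.Tendsto.congr' hevV hRv_lim
  exact ⟨hPi, hV⟩
end
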